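/- arXiv:1412.3976 — 8 statements merged into one kernel-verified Lean document; each statement's English description precedes it below -/
import Mathlib

section
/- Let G be a simple graph and C, C' cliques of G with |C| = |C'| = k such that there exists a TAR(k)-sequence from C to C'. Then there exists a shortest TAR(k)-sequence C_0 = C, C_1, ..., C_ℓ = C' such that |C_{2i-1}| = k+1 and |C_{2i}| = k for every i with 1 ≤ i ≤ ℓ/2 (in particular ℓ is even and every clique in the sequence has size k or k+1). -/
variable {V : Type*} [DecidableEq V]

/-- One TAR step: add or remove a single vertex. -/
def TARStep (C C' : Finset V) : Prop :=
  (∃ v ∉ C, C' = insert v C) ∨ (∃ v ∈ C, C' = C.erase v)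

/-- A TAR(k)-sequence of cliques of `G` of length `ℓ`, given by `f` on indices `0..ℓ`. -/
def TARSeq (G : SimpleGraph V) (k ℓ : ℕ) (f : ℕ → Finset V) : Prop :=
  (∀ i ≤ ℓ, G.IsClique (f i : Set V) ∧ k ≤ (f i).card) ∧
  ∀ i < ℓ, TARStep (f i) (f (i + 1))

lemma TARStep.card_eq {A B : Finset V} (h : TARStep A B) :
    B.card = A.card + 1 ∨ A.card = B.card + 1 := by
  rcases h with ⟨v, hv, rfl⟩ | ⟨v, hv, rfl⟩
  · exact Or.inl (Finset.card_insert_of_notMem hv)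
  · right
    have h1 : 1 ≤ A.card := Finset.card_pos.mpr ⟨v, hv⟩
    rw [Finset.card_erase_of_mem hv]
    omega

theorem stmt2 (G : SimpleGraph V) (C C' : Finset V) (k : ℕ)
    (hC : C.card = k) (hC' : C'.card = k)
    (hex : ∃ (ℓ : ℕ) (f : ℕ → Finset V), TARSeq G k ℓ f ∧ f 0 = C ∧ f ℓ = C') :
    ∃ (ℓ : ℕ) (f : ℕ → Finset V),
      TARSeq G k ℓ f ∧ f 0 = C ∧ f ℓ = C' ∧
      (∀ (ℓ' : ℕ) (g : ℕ → Finset V), TARSeq G k ℓ' g → g 0 = C → g ℓ' = C' → ℓ ≤ ℓ') ∧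
      Even ℓ ∧
      ∀ i, 1 ≤ i → 2 * i ≤ ℓ →
        (f (2 * i - 1)).card = k + 1 ∧ (f (2 * i)).card = k := by
  classical
  have hQ : ∃ m, ∃ f : ℕ → Finset V, TARSeq G k m f ∧ f 0 = C ∧ f m = C' := hex
  obtain ⟨ℓ, hℓQ, hℓmin⟩ : ∃ ℓ, (∃ f : ℕ → Finset V, TARSeq G k ℓ f ∧ f 0 = C ∧ f ℓ = C') ∧
      ∀ m, (∃ f : ℕ → Finset V, TARSeq G k m f ∧ f 0 = C ∧ f m = C') → ℓ ≤ m :=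
    ⟨Nat.find hQ, Nat.find_spec hQ, fun m hm => Nat.find_min' hQ hm⟩
  have hmin : ∀ (ℓ' : ℕ) (g : ℕ → Finset V),
      TARSeq G k ℓ' g → g 0 = C → g ℓ' = C' → ℓ ≤ ℓ' :=
    fun ℓ' g h1 h2 h3 => hℓmin ℓ' ⟨g, h1, h2, h3⟩
  -- now minimize the total size among sequences of length ℓ
  have hP : ∃ s, ∃ f : ℕ → Finset V, TARSeq G k ℓ f ∧ f 0 = C ∧ f ℓ = C' ∧
      (∑ i ∈ Finset.range (ℓ + 1), (f i).card) = s := by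
    obtain ⟨f, h1, h2, h3⟩ := hℓQ
    exact ⟨_, f, h1, h2, h3, rfl⟩
  obtain ⟨s, ⟨f, hseq, hf0, hfl, hsum⟩, hsmin⟩ :
      ∃ s, (∃ f : ℕ → Finset V, TARSeq G k ℓ f ∧ f 0 = C ∧ f ℓ = C' ∧
        (∑ i ∈ Finset.range (ℓ + 1), (f i).card) = s) ∧
      ∀ t, (∃ f : ℕ → Finset V, TARSeq G k ℓ f ∧ f 0 = C ∧ f ℓ = C' ∧
        (∑ i ∈ Finset.range (ℓ + 1), (f i).card) = t) → s ≤ t :=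
    ⟨Nat.find hP, Nat.find_spec hP, fun t ht => Nat.find_min' hP ht⟩
  have hstep := hseq.2
  have hcl := hseq.1
  -- parity of cards
  have hpar : ∀ i ≤ ℓ, (f i).card % 2 = (k + i) % 2 := by
    intro i
    induction i with
    | zero => intro _; simp [hf0, hC]
    | succ n ih =>
      intro hn
      have h1 := ih (by omega)
      have h2 := (hstep n (by omega)).card_eq
      omega
  -- all cards are at most k + 1
  have hbd : ∀ i ≤ ℓ, (f i).card ≤ k + 1 := by
    by_contra hcon
    push_neg at hcon
    -- take an index of maximal card
    obtain ⟨j, hjmem, hjmax⟩ := Finset.exists_max_image (Finset.range (ℓ + 1))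
      (fun i => (f i).card) ⟨0, Finset.mem_range.mpr (by omega)⟩
    rw [Finset.mem_range] at hjmem
    obtain ⟨i0, hi0, hbig⟩ := hcon
    have hjbig : k + 2 ≤ (f j).card := by
      have := hjmax i0 (Finset.mem_range.mpr (by omega))
      omega
    have hj0 : j ≠ 0 := by rintro rfl; rw [hf0, hC] at hjbig; omega
    have hjl : j ≠ ℓ := by rintro rfl; rw [hfl, hC'] at hjbig; omega
    obtain ⟨j', rfl⟩ : ∃ j', j = j' + 1 := ⟨j - 1, by omega⟩
    -- the step into j is an insertion
    have hup : ∃ u ∉ f j', f (j' + 1) = insert u (f j') := by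
      rcases hstep j' (by omega) with h | ⟨v, hv, hv'⟩
      · exact h
      · exfalso
        have hc := hjmax j' (Finset.mem_range.mpr (by omega))
        have h1 : 1 ≤ (f j').card := Finset.card_pos.mpr ⟨v, hv⟩
        have h2 : (f (j' + 1)).card = (f j').card - 1 := by
          rw [hv']; exact Finset.card_erase_of_mem hv
        omega
    -- the step out of j is an erasure
    have hdown : ∃ v ∈ f (j' + 1), f (j' + 2) = (f (j' + 1)).erase v := by
      rcases hstep (j' + 1) (by omega) with ⟨v, hv, hv'⟩ | h
      · exfalso
        have hc := hjmax (j' + 2) (Finset.mem_range.mpr (by omega))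
        have h2 : (f (j' + 2)).card = (f (j' + 1)).card + 1 := by
          rw [hv']; exact Finset.card_insert_of_notMem hv
        omega
      · exact h
    obtain ⟨u, hu, hins⟩ := hup
    obtain ⟨v, hv, hers⟩ := hdown
    have hjl2 : j' + 2 ≤ ℓ := by omega
    by_cases huv : u = v
    · -- shorten the sequence by 2, contradicting minimality of ℓ
      subst huv
      have hret : f (j' + 2) = f j' := by rw [hers, hins, Finset.erase_insert hu]
      set g : ℕ → Finset V := fun i => if i < j' + 1 then f i else f (i + 2) with hg
      have hgseq : TARSeq G k (ℓ - 2) g := by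
        constructor
        · intro i hi
          by_cases h : i < j' + 1 <;> simp only [hg, h, if_true, if_false]
          · exact hcl i (by omega)
          · exact hcl (i + 2) (by omega)
        · intro i hi
          rcases Nat.lt_trichotomy (i + 1) (j' + 1) with h | h | h
          · have h' : i < j' + 1 := by omega
            simp only [hg, if_pos h, if_pos h']
            exact hstep i (by omega)
          · have h1 : i < j' + 1 := by omega
            have h2 : ¬ (i + 1 < j' + 1) := by omega
            simp only [hg, if_pos h1, if_neg h2]
            have h3 : i = j' := by omega
            subst h3
            rw [← hret]
            exact hstep (i + 2) (by omega)
          · have h1 : ¬ (i < j' + 1) := by omega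
            have h2 : ¬ (i + 1 < j' + 1) := by omega
            simp only [hg, if_neg h1, if_neg h2]
            exact hstep (i + 2) (by omega)
      have hg0 : g 0 = C := by simp only [hg, if_pos (by omega : 0 < j' + 1)]; exact hf0
      have hgl : g (ℓ - 2) = C' := by
        rcases eq_or_lt_of_le hjl2 with hcase | hcase
        · have h1 : ℓ - 2 < j' + 1 := by omega
          simp only [hg, if_pos h1]
          rw [(by omega : ℓ - 2 = j'), ← hret, hcase]
          exact hfl
        · have h1 : ¬ (ℓ - 2 < j' + 1) := by omega
          simp only [hg, if_neg h1]
          rw [(by omega : ℓ - 2 + 2 = ℓ)]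
          exact hfl
      have := hℓmin (ℓ - 2) ⟨g, hgseq, hg0, hgl⟩
      omega
    · -- replace f j by an intermediate set, decreasing the total size by 2
      have hvj' : v ∈ f j' := by
        rw [hins] at hv
        rcases Finset.mem_insert.mp hv with h | h
        · exact absurd h.symm huv
        · exact h
      set g : ℕ → Finset V := fun i => if i = j' + 1 then (f j').erase v else f i with hg
      have hcardj' : k + 1 ≤ (f j').card := by
        have h2 : (f (j' + 1)).card = (f j').card + 1 := by
          rw [hins]; exact Finset.card_insert_of_notMem hu
        omega
      have hgseq : TARSeq G k ℓ g := by
        constructor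
        · intro i hi
          by_cases h : i = j' + 1 <;> simp only [hg, h, if_true, if_false]
          · constructor
            · exact ((hcl j' (by omega)).1).subset (by
                intro x hx
                simp only [Finset.coe_erase, Set.mem_diff] at hx
                exact hx.1)
            · rw [Finset.card_erase_of_mem hvj']
              omega
          · exact hcl i hi
        · intro i hi
          rcases Nat.lt_trichotomy i j' with h | h | h
          · have h1 : i ≠ j' + 1 := by omega
            have h2 : i + 1 ≠ j' + 1 := by omega
            simp only [hg, if_neg h1, if_neg h2]
            exact hstep i hi
          · subst h
            have h1 : i ≠ i + 1 := by omega
            simp only [hg, if_neg h1, if_pos rfl]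
            exact Or.inr ⟨v, hvj', rfl⟩
          · rcases Nat.lt_or_ge (j' + 1) i with h' | h'
            · have h1 : i ≠ j' + 1 := by omega
              have h2 : i + 1 ≠ j' + 1 := by omega
              simp only [hg, if_neg h1, if_neg h2]
              exact hstep i hi
            · have h1 : i = j' + 1 := by omega
              subst h1
              have h2 : j' + 1 + 1 ≠ j' + 1 := by omega
              simp only [hg, if_pos rfl, if_neg h2]
              rw [hers, hins, Finset.erase_insert_of_ne huv]
              exact Or.inl ⟨u, fun hc => hu (Finset.mem_of_mem_erase hc), rfl⟩
      have hg0 : g 0 = C := by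
        simp only [hg, if_neg (by omega : ¬ ((0:ℕ) = j' + 1))]; exact hf0
      have hgl : g ℓ = C' := by
        have hne : ¬ (ℓ = j' + 1) := fun h => hjl h.symm
        simp only [hg, if_neg hne]; exact hfl
      -- sum comparison
      have hsum2 : (∑ i ∈ Finset.range (ℓ + 1), (g i).card) + 2
          = ∑ i ∈ Finset.range (ℓ + 1), (f i).card := by
        have hmem : j' + 1 ∈ Finset.range (ℓ + 1) := Finset.mem_range.mpr (by omega)
        rw [← Finset.sum_erase_add _ _ hmem, ← Finset.sum_erase_add _ _ hmem]
        have he : ∑ i ∈ (Finset.range (ℓ + 1)).erase (j' + 1), (g i).card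
            = ∑ i ∈ (Finset.range (ℓ + 1)).erase (j' + 1), (f i).card := by
          apply Finset.sum_congr rfl
          intro x hx
          have : x ≠ j' + 1 := (Finset.mem_erase.mp hx).1
          simp [hg, this]
        rw [he]
        have h1 : (g (j' + 1)).card = (f j').card - 1 := by
          simp only [hg, if_pos rfl]
          exact Finset.card_erase_of_mem hvj'
        have h2 : (f (j' + 1)).card = (f j').card + 1 := by
          rw [hins]; exact Finset.card_insert_of_notMem hu
        omega
      have := hsmin _ ⟨g, hgseq, hg0, hgl, rfl⟩
      omega
  -- conclusions
  have heven : Even ℓ := by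
    have h1 := hpar ℓ le_rfl
    rw [hfl, hC'] at h1
    rw [Nat.even_iff]
    omega
  refine ⟨ℓ, f, hseq, hf0, hfl, hmin, heven, ?_⟩
  intro i hi1 hi2
  have ho : (f (2 * i - 1)).card % 2 = (k + (2 * i - 1)) % 2 := hpar _ (by omega)
  have he : (f (2 * i)).card % 2 = (k + 2 * i) % 2 := hpar _ (by omega)
  have hb1 := hbd (2 * i - 1) (by omega)
  have hb2 := hbd (2 * i) (by omega)
  have hl1 := (hcl (2 * i - 1) (by omega)).2
  have hl2 := (hcl (2 * i) (by omega)).2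
  constructor <;> omega
end

section
/- Let G be a simple graph and C, C' cliques of G with |C| = |C'| = k. If there exists a TS-sequence from C to C' of length ℓ, then there exists a TAR(k)-sequence from C to C' of length 2ℓ. -/
variable {V : Type*} [DecidableEq V]

/-- One TS step: slide a token along an edge. -/
def TSStep (G : SimpleGraph V) (C C' : Finset V) : Prop :=
  ∃ v ∈ C, ∃ w, w ∉ C ∧ G.Adj v w ∧ C' = insert w (C.erase v)

/-- A TS-sequence of cliques of `G` of length `ℓ`. -/
def TSSeq (G : SimpleGraph V) (ℓ : ℕ) (f : ℕ → Finset V) : Prop :=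
  (∀ i ≤ ℓ, G.IsClique (f i : Set V)) ∧ ∀ i < ℓ, TSStep G (f i) (f (i + 1))

theorem stmt3 (G : SimpleGraph V) (C C' : Finset V) (k ℓ : ℕ)
    (hC : C.card = k) (hC' : C'.card = k)
    (f : ℕ → Finset V) (hf : TSSeq G ℓ f) (h0 : f 0 = C) (hl : f ℓ = C') :
    ∃ g : ℕ → Finset V, TARSeq G k (2 * ℓ) g ∧ g 0 = C ∧ g (2 * ℓ) = C' := by
  obtain ⟨hclique, hstep⟩ := hf
  have hcard : ∀ i ≤ ℓ, (f i).card = k := by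
    intro i hi
    induction i with
    | zero => simp [h0, hC]
    | succ n ih =>
      have hn : n ≤ ℓ := Nat.le_of_succ_le hi
      obtain ⟨v, hv, w, hw, hadj, heq⟩ := hstep n (by omega)
      have hpos : 0 < (f n).card := Finset.card_pos.mpr ⟨v, hv⟩
      have := ih hn
      rw [heq, Finset.card_insert_of_notMem (fun h => hw (Finset.mem_of_mem_erase h)),
        Finset.card_erase_of_mem hv]
      omega
  refine ⟨fun i => if i % 2 = 0 then f (i / 2) else f (i / 2) ∪ f (i / 2 + 1), ?_, ?_, ?_⟩
  · constructor
    · intro i hi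
      rcases Nat.even_or_odd i with he | ho
      · obtain ⟨j, rfl⟩ := he
        have hj : j ≤ ℓ := by omega
        have h2 : (j + j) % 2 = 0 := by omega
        have h3 : (j + j) / 2 = j := by omega
        beta_reduce
        rw [h2, if_pos rfl, h3]
        exact ⟨hclique j hj, (hcard j hj).ge⟩
      · obtain ⟨j, rfl⟩ := ho
        have hj : j < ℓ := by omega
        have h2 : (2 * j + 1) % 2 = 1 := by omega
        have h3 : (2 * j + 1) / 2 = j := by omega
        beta_reduce
        rw [h2, if_neg (by omega), h3]
        obtain ⟨v, hv, w, hw, hadj, heq⟩ := hstep j hj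
        have hwe : w ∉ (f j).erase v := fun h => hw (Finset.mem_of_mem_erase h)
        have hunion : f j ∪ f (j + 1) = insert w (f j) := by
          rw [heq, Finset.union_comm, Finset.insert_union,
            Finset.union_eq_right.mpr (Finset.erase_subset _ _)]
        rw [hunion]
        constructor
        · rw [Finset.coe_insert]
          refine (hclique j (le_of_lt hj)).insert ?_
          intro b hb hne
          by_cases hbv : b = v
          · subst hbv; exact hadj.symm
          · refine hclique (j + 1) hj ?_ ?_ hne
            · rw [heq]; simp
            · rw [heq]; simp [hbv, hb]
        · rw [Finset.card_insert_of_notMem hw, hcard j (le_of_lt hj)]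
          omega
    · intro i hi
      rcases Nat.even_or_odd i with he | ho
      · obtain ⟨j, rfl⟩ := he
        have hj : j < ℓ := by omega
        obtain ⟨v, hv, w, hw, hadj, heq⟩ := hstep j hj
        have hunion : f j ∪ f (j + 1) = insert w (f j) := by
          rw [heq, Finset.union_comm, Finset.insert_union,
            Finset.union_eq_right.mpr (Finset.erase_subset _ _)]
        have h2 : (j + j) % 2 = 0 := by omega
        have h3 : (j + j) / 2 = j := by omega
        have h2' : (j + j + 1) % 2 = 1 := by omega
        have h3' : (j + j + 1) / 2 = j := by omega
        beta_reduce
        rw [h2, if_pos rfl, h3, h2', if_neg (by omega), h3', hunion]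
        exact Or.inl ⟨w, hw, rfl⟩
      · obtain ⟨j, rfl⟩ := ho
        have hj : j < ℓ := by omega
        obtain ⟨v, hv, w, hw, hadj, heq⟩ := hstep j hj
        have hvw : v ≠ w := fun h => hw (h ▸ hv)
        have hunion : f j ∪ f (j + 1) = insert w (f j) := by
          rw [heq, Finset.union_comm, Finset.insert_union,
            Finset.union_eq_right.mpr (Finset.erase_subset _ _)]
        have h2 : (2 * j + 1) % 2 = 1 := by omega
        have h3 : (2 * j + 1) / 2 = j := by omega
        have h2' : (2 * j + 1 + 1) % 2 = 0 := by omega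
        have h3' : (2 * j + 1 + 1) / 2 = j + 1 := by omega
        beta_reduce
        rw [h2, if_neg (by omega), h3, h2', if_pos rfl, h3', hunion]
        refine Or.inr ⟨v, Finset.mem_insert_of_mem hv, ?_⟩
        rw [heq, Finset.erase_insert_of_ne (Ne.symm hvw)]
  · simp [h0]
  · have h3 : (2 * ℓ) / 2 = ℓ := by omega
    simp [h3, hl]
end

section
/- Let G be a simple graph and C, C' cliques of G with |C| = |C'| = k. If there exists a TAR(k)-sequence from C to C', then there exists a TS-sequence from C to C'. Moreover the minimum length of a TS-sequence from C to C' equals half the minimum length of a TAR(k)-sequence from C to C'. -/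
variable {V : Type*} [DecidableEq V]

lemma tsstep_card {G : SimpleGraph V} {C C' : Finset V} (h : TSStep G C C') :
    C'.card = C.card := by
  obtain ⟨v, hv, w, hw, -, rfl⟩ := h
  have hw' : w ∉ C.erase v := fun hmem => hw (Finset.mem_of_mem_erase hmem)
  rw [Finset.card_insert_of_notMem hw', Finset.card_erase_of_mem hv]
  have : 1 ≤ C.card := Finset.card_pos.2 ⟨v, hv⟩
  omega

lemma tsseq_card {G : SimpleGraph V} {ℓ : ℕ} {f : ℕ → Finset V} (h : TSSeq G ℓ f) :
    ∀ i ≤ ℓ, (f i).card = (f 0).card := by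
  intro i
  induction i with
  | zero => intro _; rfl
  | succ n ih =>
    intro hn
    rw [tsstep_card (h.2 n (by omega)), ih (by omega)]

/-- Easy direction: a TS-sequence of length `ℓ` yields a TAR(k)-sequence of length `2ℓ`. -/
lemma ts_to_tar {G : SimpleGraph V} {ℓ : ℕ} {f : ℕ → Finset V} {k : ℕ}
    (h : TSSeq G ℓ f) (hcard : (f 0).card = k) :
    ∃ g : ℕ → Finset V, TARSeq G k (2 * ℓ) g ∧ g 0 = f 0 ∧ g (2 * ℓ) = f ℓ := by
  classical
  set g : ℕ → Finset V := fun n => if Even n then f (n / 2) else f (n / 2) ∪ f (n / 2 + 1)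
    with hg
  have hg_even : ∀ t, g (2 * t) = f t := by
    intro t
    have h1 : Even (2 * t) := even_two_mul t
    have h2 : 2 * t / 2 = t := by omega
    simp [hg, h1, h2]
  have hg_odd : ∀ t, g (2 * t + 1) = f t ∪ f (t + 1) := by
    intro t
    have h1 : ¬ Even (2 * t + 1) := by simp [Nat.even_add_one, parity_simps]
    have h2 : (2 * t + 1) / 2 = t := by omega
    simp [hg, h1, h2]
  -- union description of an intermediate set
  have hunion : ∀ t < ℓ, ∀ v ∈ f t, ∀ w, w ∉ f t → f (t + 1) = insert w ((f t).erase v) →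
      f t ∪ f (t + 1) = insert w (f t) := by
    intro t _ v hv w hw he
    rw [he]
    ext x
    simp only [Finset.mem_union, Finset.mem_insert, Finset.mem_erase]
    constructor
    · rintro (hx | hx | ⟨-, hx⟩) <;> tauto
    · rintro (rfl | hx) <;> tauto
  refine ⟨g, ⟨?_, ?_⟩, by simpa using hg_even 0, by simpa using hg_even ℓ⟩
  · -- cliques and cards
    intro i hi
    rcases Nat.even_or_odd i with ⟨t, ht⟩ | ⟨t, ht⟩
    · have ht' : i = 2 * t := by omega
      subst ht'
      have htℓ : t ≤ ℓ := by omega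
      refine ⟨by rw [hg_even t]; exact h.1 t htℓ, ?_⟩
      rw [hg_even t, tsseq_card h t htℓ, hcard]
    · have ht' : i = 2 * t + 1 := by omega
      subst ht'
      have htℓ : t < ℓ := by omega
      obtain ⟨v, hv, w, hw, hadj, he⟩ := h.2 t htℓ
      have hu := hunion t htℓ v hv w hw he
      rw [hg_odd t, hu]
      constructor
      · -- insert w (f t) is a clique
        rw [Finset.coe_insert]
        refine (h.1 t (le_of_lt htℓ)).insert ?_
        intro b hb hbw
        by_cases hbv : b = v
        · subst hbv; exact hadj.symm
        · have hb1 : b ∈ f (t + 1) := by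
            rw [he]; exact Finset.mem_insert_of_mem (Finset.mem_erase.2 ⟨hbv, hb⟩)
          have hw1 : w ∈ f (t + 1) := by rw [he]; exact Finset.mem_insert_self _ _
          exact (h.1 (t + 1) htℓ) hw1 hb1 hbw
      · rw [Finset.card_insert_of_notMem hw, tsseq_card h t (le_of_lt htℓ), hcard]
        omega
  · -- steps
    intro i hi
    rcases Nat.even_or_odd i with ⟨t, ht⟩ | ⟨t, ht⟩
    · have ht' : i = 2 * t := by omega
      subst ht'
      have htℓ : t < ℓ := by omega
      obtain ⟨v, hv, w, hw, hadj, he⟩ := h.2 t htℓ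
      have hu := hunion t htℓ v hv w hw he
      rw [hg_even t, hg_odd t, hu]
      exact Or.inl ⟨w, hw, rfl⟩
    · have ht' : i = 2 * t + 1 := by omega
      subst ht'
      have htℓ : t < ℓ := by omega
      obtain ⟨v, hv, w, hw, hadj, he⟩ := h.2 t htℓ
      have hu := hunion t htℓ v hv w hw he
      have h2 : 2 * t + 1 + 1 = 2 * (t + 1) := by ring
      rw [hg_odd t, hu, h2, hg_even (t + 1)]
      refine Or.inr ⟨v, Finset.mem_insert_of_mem hv, ?_⟩
      have hvw : v ≠ w := fun hvw => hw (hvw ▸ hv)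
      rw [he, Finset.erase_insert_of_ne (Ne.symm hvw)]

/-- Hard direction: a TAR(k)-sequence of length `m` between cliques of size `k`
yields a TS-sequence of length `ℓ` with `2ℓ ≤ m`. -/
lemma tar_to_ts {G : SimpleGraph V} {k : ℕ} :
    ∀ m : ℕ, ∀ f : ℕ → Finset V, TARSeq G k m f → (f 0).card = k → (f m).card = k →
    ∃ ℓ : ℕ, 2 * ℓ ≤ m ∧ ∃ g : ℕ → Finset V, TSSeq G ℓ g ∧ g 0 = f 0 ∧ g ℓ = f m := by
  classical
  intro m
  induction m using Nat.strong_induction_on with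
  | _ m IH =>
  intro f htar h0 hm
  rcases Nat.eq_zero_or_pos m with rfl | hm1
  · exact ⟨0, by omega, f, ⟨fun i hi => by
      have := Nat.le_zero.1 hi; subst this; exact (htar.1 0 le_rfl).1,
      fun i hi => absurd hi (by omega)⟩, rfl, rfl⟩
  -- there is some removal step
  have hQ : ∀ j : ℕ, ∀ f : ℕ → Finset V, TARSeq G k m f → (f 0).card = k → (f m).card = k →
      j < m → (∃ u ∈ f j, f (j + 1) = (f j).erase u) →
      (∀ i < j, ∃ v, v ∉ f i ∧ f (i + 1) = insert v (f i)) →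
      ∃ ℓ : ℕ, 2 * ℓ ≤ m ∧ ∃ g : ℕ → Finset V, TSSeq G ℓ g ∧ g 0 = f 0 ∧ g ℓ = f m := by
    intro j
    induction j using Nat.strong_induction_on with
    | _ j IHj =>
    intro f htar h0 hm hjm hrem hadd
    obtain ⟨u, hu, herase⟩ := hrem
    -- cards grow along the initial adds
    have hcard : ∀ i ≤ j, (f i).card = k + i := by
      intro i
      induction i with
      | zero => intro _; simpa using h0
      | succ n ih =>
        intro hn
        obtain ⟨v, hv, he⟩ := hadd n (by omega)
        rw [he, Finset.card_insert_of_notMem hv, ih (by omega)]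
        omega
    -- j ≥ 1
    have hj1 : 1 ≤ j := by
      by_contra hj0
      have hj0' : j = 0 := by omega
      subst hj0'
      have hk1 : 1 ≤ k := by
        have := Finset.card_pos.2 ⟨u, hu⟩; omega
      have hc1 : (f 1).card = k - 1 := by
        rw [herase, Finset.card_erase_of_mem hu, h0]
      have := (htar.1 1 (by omega)).2
      omega
    obtain ⟨v, hv, hins⟩ := hadd (j - 1) (by omega)
    have hjj : j - 1 + 1 = j := by omega
    rw [hjj] at hins
    by_cases huv : u = v
    · -- cancellation : the add at j-1 and the removal at j cancel
      subst huv
      have hcancel : f (j + 1) = f (j - 1) := by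
        rw [herase, hins, Finset.erase_insert hv]
      set f' : ℕ → Finset V := fun i => if i ≤ j - 1 then f i else f (i + 2) with hf'
      have hf'val : ∀ i, f' i = if i ≤ j - 1 then f i else f (i + 2) := fun i => rfl
      have hm2 : m - 2 < m := by omega
      have htar' : TARSeq G k (m - 2) f' := by
        constructor
        · intro i hi
          rw [hf'val]
          split
          · exact htar.1 i (by omega)
          · exact htar.1 (i + 2) (by omega)
        · intro i hi
          rcases lt_trichotomy i (j - 1) with h1 | h1 | h1
          · have e1 : f' i = f i := by rw [hf'val, if_pos (by omega : i ≤ j - 1)]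
            have e2 : f' (i + 1) = f (i + 1) := by
              rw [hf'val, if_pos (by omega : i + 1 ≤ j - 1)]
            rw [e1, e2]
            exact htar.2 i (by omega)
          · subst h1
            have e1 : f' (j - 1) = f (j - 1) := by rw [hf'val, if_pos le_rfl]
            have e2 : f' (j - 1 + 1) = f (j + 2) := by
              rw [hf'val, if_neg (by omega : ¬ j - 1 + 1 ≤ j - 1)]
              congr 1
              omega
            rw [e1, e2, ← hcancel]
            exact htar.2 (j + 1) (by omega)
          · have e1 : f' i = f (i + 2) := by
              rw [hf'val, if_neg (by omega : ¬ i ≤ j - 1)]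
            have e2 : f' (i + 1) = f (i + 2 + 1) := by
              rw [hf'val, if_neg (by omega : ¬ i + 1 ≤ j - 1)]
            rw [e1, e2]
            exact htar.2 (i + 2) (by omega)
      have h0' : (f' 0).card = k := by
        have : f' 0 = f 0 := by rw [hf'val, if_pos (Nat.zero_le _)]
        rw [this, h0]
      have hend : f' (m - 2) = f m := by
        rw [hf'val]
        by_cases hc : m - 2 ≤ j - 1
        · rw [if_pos hc]
          have hj : m - 2 = j - 1 := by omega
          have hjm' : j + 1 = m := by omega
          rw [hj, ← hjm', hcancel]
        · rw [if_neg hc]; congr 1; omega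
      have hm' : (f' (m - 2)).card = k := by rw [hend, hm]
      obtain ⟨ℓ, hℓ, g, hts, hg0, hgℓ⟩ := IH (m - 2) hm2 f' htar' h0' hm'
      refine ⟨ℓ, by omega, g, hts, ?_, ?_⟩
      · rw [hg0, hf'val, if_pos (Nat.zero_le _)]
      · rw [hgℓ, hend]
    · -- u ≠ v
      have huj : u ∈ f (j - 1) := by
        rw [hins] at hu
        rcases Finset.mem_insert.1 hu with h | h
        · exact absurd h huv
        · exact h
      rcases eq_or_lt_of_le hj1 with hj1' | hj2
      · -- j = 1 : genuine TS step at the beginning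
        have hj' : j = 1 := hj1'.symm
        subst hj'
        simp only [Nat.sub_self] at hins huj hv
        have herase2 : f 2 = (f 1).erase u := herase
        -- f 2 = insert v ((f 0).erase u)
        have hstep : f 2 = insert v ((f 0).erase u) := by
          rw [herase2, hins, Finset.erase_insert_of_ne (show v ≠ u from fun h => huv h.symm)]
        have hadj : G.Adj u v := by
          have hclique := (htar.1 1 (by omega)).1
          have hu1 : u ∈ f 1 := hu
          have hv1 : v ∈ f 1 := by rw [hins]; exact Finset.mem_insert_self _ _
          exact hclique hu1 hv1 (fun h => huv h)
        have htss : TSStep G (f 0) (f 2) := ⟨u, huj, v, hv, hadj, hstep⟩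
        -- shifted sequence
        set f' : ℕ → Finset V := fun i => f (i + 2) with hf'
        have htar' : TARSeq G k (m - 2) f' := by
          constructor
          · intro i hi; exact htar.1 (i + 2) (by omega)
          · intro i hi
            exact htar.2 (i + 2) (by omega)
        have h0' : (f' 0).card = k := by
          show (f 2).card = k
          rw [herase2, Finset.card_erase_of_mem hu, hins,
            Finset.card_insert_of_notMem hv, h0]
          omega
        have hend : f' (m - 2) = f m := by show f (m - 2 + 2) = f m; congr 1; omega
        have hm' : (f' (m - 2)).card = k := by rw [hend, hm]
        obtain ⟨ℓ, hℓ, g, hts, hg0, hgℓ⟩ := IH (m - 2) (by omega) f' htar' h0' hm'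
        -- prepend the TS step
        refine ⟨ℓ + 1, by omega, fun i => if i = 0 then f 0 else g (i - 1), ⟨?_, ?_⟩, by simp, ?_⟩
        · intro i hi
          rcases Nat.eq_zero_or_pos i with rfl | hi0
          · simpa using (htar.1 0 (by omega)).1
          · have : ¬ i = 0 := by omega
            simp only [this, if_neg, ite_false]
            exact hts.1 (i - 1) (by omega)
        · intro i hi
          rcases Nat.eq_zero_or_pos i with rfl | hi0
          · simp only [ite_true, Nat.sub_self]
            have : (1 : ℕ) ≠ 0 := by omega
            simp only [this, ite_false]
            rw [hg0]
            exact htss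
          · have e1 : ¬ i = 0 := by omega
            have e2 : ¬ i + 1 = 0 := by omega
            simp only [e1, e2, ite_false]
            have e3 : i + 1 - 1 = (i - 1) + 1 := by omega
            rw [e3]
            exact hts.2 (i - 1) (by omega)
        · have e2 : ¬ ℓ + 1 = 0 := by omega
          simp only [e2, ite_false, Nat.add_sub_cancel]
          rw [hgℓ, hend]
      · -- j ≥ 2 : swap the add at j-1 with the removal at j
        set f' : ℕ → Finset V := fun i => if i = j then (f (j - 1)).erase u else f i with hf'
        have hf'val : ∀ i, f' i = if i = j then (f (j - 1)).erase u else f i := fun i => rfl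
        have hcj1 : (f (j - 1)).card = k + (j - 1) := hcard (j - 1) (by omega)
        have htar' : TARSeq G k m f' := by
          constructor
          · intro i hi
            rw [hf'val]
            by_cases hc : i = j
            · rw [if_pos hc]
              constructor
              · exact ((htar.1 (j - 1) (by omega)).1).subset
                  (by exact_mod_cast Finset.erase_subset _ _)
              · rw [Finset.card_erase_of_mem huj, hcj1]
                omega
            · rw [if_neg hc]
              exact htar.1 i hi
          · intro i hi
            by_cases h1 : i = j - 1
            · have e1 : f' i = f i := by rw [hf'val, if_neg (by omega : ¬ i = j)]
              have e2 : f' (i + 1) = (f (j - 1)).erase u := by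
                rw [hf'val, if_pos (by omega : i + 1 = j)]
              rw [e1, e2, h1]
              exact Or.inr ⟨u, huj, rfl⟩
            · by_cases h2 : i = j
              · have e1 : f' i = (f (j - 1)).erase u := by rw [hf'val, if_pos h2]
                have e2 : f' (i + 1) = f (i + 1) := by
                  rw [hf'val, if_neg (by omega : ¬ i + 1 = j)]
                rw [e1, e2, h2, herase, hins,
                  Finset.erase_insert_of_ne (show v ≠ u from fun h => huv h.symm)]
                refine Or.inl ⟨v, fun hmem => hv (Finset.mem_of_mem_erase hmem), rfl⟩
              · have e1 : f' i = f i := by rw [hf'val, if_neg h2]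
                have e2 : f' (i + 1) = f (i + 1) := by
                  rw [hf'val, if_neg (by omega : ¬ i + 1 = j)]
                rw [e1, e2]
                exact htar.2 i hi
        have h0' : (f' 0).card = k := by
          have : f' 0 = f 0 := by rw [hf'val, if_neg (by omega : ¬ (0 : ℕ) = j)]
          rw [this, h0]
        have hm' : (f' m).card = k := by
          have : f' m = f m := by rw [hf'val, if_neg (by omega : ¬ m = j)]
          rw [this, hm]
        have hrem' : ∃ u' ∈ f' (j - 1), f' (j - 1 + 1) = (f' (j - 1)).erase u' := by
          refine ⟨u, ?_, ?_⟩
          · rw [hf'val, if_neg (by omega : ¬ j - 1 = j)]; exact huj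
          · rw [hf'val, hf'val, if_pos hjj, if_neg (by omega : ¬ j - 1 = j)]
        have hadd' : ∀ i < j - 1, ∃ v', v' ∉ f' i ∧ f' (i + 1) = insert v' (f' i) := by
          intro i hi
          obtain ⟨v', hv', he⟩ := hadd i (by omega)
          have e1 : f' i = f i := by rw [hf'val, if_neg (by omega : ¬ i = j)]
          have e2 : f' (i + 1) = f (i + 1) := by rw [hf'val, if_neg (by omega : ¬ i + 1 = j)]
          rw [e1, e2]
          exact ⟨v', hv', he⟩
        obtain ⟨ℓ, hℓ, g, hts, hg0, hgℓ⟩ :=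
          IHj (j - 1) (by omega) f' htar' h0' hm' (by omega) hrem' hadd'
        refine ⟨ℓ, hℓ, g, hts, ?_, ?_⟩
        · rw [hg0, hf'val, if_neg (by omega : ¬ (0 : ℕ) = j)]
        · rw [hgℓ, hf'val, if_neg (by omega : ¬ m = j)]
  -- find the first removal step
  have hex : ∃ j, j < m ∧ ∃ u ∈ f j, f (j + 1) = (f j).erase u := by
    by_contra hnone
    push_neg at hnone
    have hall : ∀ i ≤ m, (f i).card = k + i := by
      intro i
      induction i with
      | zero => intro _; simpa using h0
      | succ n ih =>
        intro hn
        rcases htar.2 n (by omega) with ⟨v, hv, he⟩ | ⟨v, hv, he⟩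
        · rw [he, Finset.card_insert_of_notMem hv, ih (by omega)]
          omega
        · exact absurd he (hnone n (by omega) v hv)
    have := hall m le_rfl
    omega
  obtain ⟨j, hj⟩ := hex
  have hPdec : DecidablePred fun j => j < m ∧ ∃ u ∈ f j, f (j + 1) = (f j).erase u :=
    fun _ => Classical.dec _
  let j0 := @Nat.find _ hPdec ⟨j, hj⟩
  have hj0 := @Nat.find_spec _ hPdec ⟨j, hj⟩
  have hmin := fun i (hi : i < j0) => @Nat.find_min _ hPdec ⟨j, hj⟩ i hi
  refine hQ j0 f htar h0 hm hj0.1 hj0.2 ?_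
  intro i hi
  have hnot := hmin i hi
  have him : i < m := by omega
  rcases htar.2 i him with ⟨v, hv, he⟩ | hrem
  · exact ⟨v, hv, he⟩
  · exact absurd ⟨him, hrem⟩ hnot

theorem stmt4 (G : SimpleGraph V) (C C' : Finset V) (k : ℕ)
    (hC : C.card = k) (hC' : C'.card = k) :
    ((∃ (ℓ : ℕ) (f : ℕ → Finset V), TARSeq G k ℓ f ∧ f 0 = C ∧ f ℓ = C') →
      ∃ (ℓ : ℕ) (f : ℕ → Finset V), TSSeq G ℓ f ∧ f 0 = C ∧ f ℓ = C') ∧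
    (∀ dts dtar : ℕ,
      IsLeast {ℓ | ∃ f : ℕ → Finset V, TSSeq G ℓ f ∧ f 0 = C ∧ f ℓ = C'} dts →
      IsLeast {ℓ | ∃ f : ℕ → Finset V, TARSeq G k ℓ f ∧ f 0 = C ∧ f ℓ = C'} dtar →
      2 * dts = dtar) := by
  constructor
  · rintro ⟨m, f, htar, h0, hmval⟩
    obtain ⟨ℓ, -, g, hts, hg0, hgℓ⟩ :=
      tar_to_ts m f htar (by rw [h0, hC]) (by rw [hmval, hC'])
    exact ⟨ℓ, g, hts, by rw [hg0, h0], by rw [hgℓ, hmval]⟩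
  · rintro dts dtar ⟨⟨fts, hts, h0, hℓ⟩, hlbts⟩ ⟨⟨ftar, htar, h0', hm'⟩, hlbtar⟩
    have h1 : dtar ≤ 2 * dts := by
      obtain ⟨g, htarg, hg0, hgℓ⟩ := ts_to_tar hts (by rw [h0, hC])
      exact hlbtar ⟨g, htarg, by rw [hg0, h0], by rw [hgℓ, hℓ]⟩
    have h2 : 2 * dts ≤ dtar := by
      obtain ⟨ℓ, hℓ2, g, htsg, hg0, hgℓ⟩ :=
        tar_to_ts dtar ftar htar (by rw [h0', hC]) (by rw [hm', hC'])
      have : dts ≤ ℓ := hlbts ⟨g, htsg, by rw [hg0, h0'], by rw [hgℓ, hm']⟩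
      omega
    omega
end

section
/- Let G be a simple graph and C, C' cliques of G with |C| = |C'| = k. There exists a TJ-sequence from C to C' if and only if there exists a TAR(k−1)-sequence from C to C'. Moreover the minimum length of a TJ-sequence from C to C' equals half the minimum length of a TAR(k−1)-sequence from C to C'. -/
variable {V : Type*} [DecidableEq V]

/-- One TJ step: remove a vertex and add another (no adjacency required). -/
def TJStep (C C' : Finset V) : Prop :=
  ∃ v ∈ C, ∃ w, w ∉ C ∧ C' = insert w (C.erase v)

/-- A TJ-sequence of cliques of `G` of length `ℓ`. -/
def TJSeq (G : SimpleGraph V) (ℓ : ℕ) (f : ℕ → Finset V) : Prop :=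
  (∀ i ≤ ℓ, G.IsClique (f i : Set V)) ∧ ∀ i < ℓ, TJStep (f i) (f (i + 1))

lemma tjstep_card {C C' : Finset V} (h : TJStep C C') : C'.card = C.card := by
  obtain ⟨v, hv, w, hw, rfl⟩ := h
  have hw' : w ∉ C.erase v := fun hmem => hw (Finset.mem_of_mem_erase hmem)
  have h1 : 1 ≤ C.card := Finset.card_pos.mpr ⟨v, hv⟩
  rw [Finset.card_insert_of_notMem hw', Finset.card_erase_of_mem hv]
  omega

lemma tjstep_inter {C C' : Finset V} (h : TJStep C C') :
    (∃ v ∈ C, C ∩ C' = C.erase v) ∧ ∃ w ∉ C ∩ C', C' = insert w (C ∩ C') := by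
  obtain ⟨v, hv, w, hw, rfl⟩ := h
  have key : C ∩ insert w (C.erase v) = C.erase v := by
    ext x
    simp only [Finset.mem_inter, Finset.mem_insert, Finset.mem_erase]
    constructor
    · rintro ⟨hxC, hx | ⟨hxv, _⟩⟩
      · exact absurd (hx ▸ hxC) hw
      · exact ⟨hxv, hxC⟩
    · rintro ⟨hxv, hxC⟩; exact ⟨hxC, Or.inr ⟨hxv, hxC⟩⟩
  refine ⟨⟨v, hv, key⟩, ⟨w, ?_, by rw [key]⟩⟩
  rw [key]; exact fun hmem => hw (Finset.mem_of_mem_erase hmem)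

lemma tjseq_card {G : SimpleGraph V} {ℓ : ℕ} {f : ℕ → Finset V} (h : TJSeq G ℓ f) :
    ∀ i ≤ ℓ, (f i).card = (f 0).card := by
  intro i
  induction i with
  | zero => intro _; rfl
  | succ n ihn => intro hle; rw [tjstep_card (h.2 n (by omega)), ihn (by omega)]

lemma tj_to_tar (G : SimpleGraph V) (k ℓ : ℕ) (f : ℕ → Finset V) (h : TJSeq G ℓ f)
    (h0 : (f 0).card = k) :
    ∃ g, TARSeq G (k - 1) (2 * ℓ) g ∧ g 0 = f 0 ∧ g (2 * ℓ) = f ℓ := by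
  refine ⟨fun j => if j % 2 = 0 then f (j / 2) else f (j / 2) ∩ f (j / 2 + 1), ⟨?_, ?_⟩, ?_, ?_⟩
  · intro i hi
    rcases Nat.even_or_odd i with ⟨m, hm⟩ | ⟨m, hm⟩
    · have e1 : i % 2 = 0 := by omega
      have e2 : i / 2 = m := by omega
      have hmℓ : m ≤ ℓ := by omega
      simp only [if_pos e1, e2]
      exact ⟨h.1 m hmℓ, by rw [tjseq_card h m hmℓ, h0]; omega⟩
    · have e1 : ¬ (i % 2 = 0) := by omega
      have e2 : i / 2 = m := by omega
      have hmℓ : m < ℓ := by omega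
      simp only [if_neg e1, e2]
      obtain ⟨⟨vv, hvv, hket⟩, _⟩ := tjstep_inter (h.2 m hmℓ)
      constructor
      · exact (h.1 m (by omega)).subset (by exact_mod_cast Finset.inter_subset_left)
      · rw [hket, Finset.card_erase_of_mem hvv, tjseq_card h m (by omega), h0]
  · intro i hi
    rcases Nat.even_or_odd i with ⟨m, hm⟩ | ⟨m, hm⟩
    · have e1 : i % 2 = 0 := by omega
      have e2 : i / 2 = m := by omega
      have e3 : ¬ ((i + 1) % 2 = 0) := by omega
      have e4 : (i + 1) / 2 = m := by omega
      have hmℓ : m < ℓ := by omega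
      simp only [if_pos e1, if_neg e3, e2, e4]
      obtain ⟨⟨vv, hvv, hket⟩, _⟩ := tjstep_inter (h.2 m hmℓ)
      exact Or.inr ⟨vv, hvv, hket⟩
    · have e1 : ¬ (i % 2 = 0) := by omega
      have e2 : i / 2 = m := by omega
      have e3 : (i + 1) % 2 = 0 := by omega
      have e4 : (i + 1) / 2 = m + 1 := by omega
      have hmℓ : m < ℓ := by omega
      simp only [if_neg e1, if_pos e3, e2, e4]
      obtain ⟨_, ⟨ww, hww, hket⟩⟩ := tjstep_inter (h.2 m hmℓ)
      exact Or.inl ⟨ww, hww, hket⟩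
  · norm_num
  · have e1 : (2 * ℓ) % 2 = 0 := by omega
    have e2 : (2 * ℓ) / 2 = ℓ := by omega
    simp only [if_pos e1, e2]
lemma red (G : SimpleGraph V) (k ℓ : ℕ) (j : ℕ) (hj : 1 ≤ j) :
    ∀ f : ℕ → Finset V, TARSeq G (k - 1) ℓ f → (f 0).card = k →
    (∃ v, v ∉ f 0 ∧ f 1 = insert v (f 0)) →
    (∀ i, 1 ≤ i → i < j → ∃ v, v ∉ f i ∧ f (i + 1) = insert v (f i)) →
    j < ℓ →
    (∃ u, u ∈ f j ∧ f (j + 1) = (f j).erase u) →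
    ∃ g : ℕ → Finset V, (g 0 = f 0 ∨ TJStep (f 0) (g 0)) ∧ TARSeq G (k - 1) (ℓ - 2) g ∧
      (g 0).card = k ∧ g (ℓ - 2) = f ℓ := by
  induction j, hj using Nat.le_induction with
  | base =>
    intro f hf h0 hadd0 _ hjl hrem
    obtain ⟨v, hv, h1⟩ := hadd0
    obtain ⟨u, hu, h2⟩ := hrem
    have hl2 : 2 ≤ ℓ := hjl
    have c1 : (f 1).card = k + 1 := by rw [h1, Finset.card_insert_of_notMem hv, h0]
    refine ⟨fun i => f (i + 2), ?_, ⟨fun i hi => hf.1 (i + 2) (by omega),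
      fun i hi => hf.2 (i + 2) (by omega)⟩, ?_, ?_⟩
    · by_cases huv : u = v
      · left; show f (0 + 2) = f 0
        rw [show (0:ℕ)+2 = 1+1 from rfl, h2, h1, huv, Finset.erase_insert hv]
      · right
        have hu0 : u ∈ f 0 := by
          rw [h1] at hu
          rcases Finset.mem_insert.mp hu with h | h
          · exact absurd h huv
          · exact h
        refine ⟨u, hu0, v, hv, ?_⟩
        show f (0 + 2) = insert v ((f 0).erase u)
        rw [show (0:ℕ)+2 = 1+1 from rfl, h2, h1,
          Finset.erase_insert_of_ne (fun h => huv h.symm)]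
    · show (f (0 + 2)).card = k
      rw [show (0:ℕ)+2 = 1+1 from rfl, h2, Finset.card_erase_of_mem hu, c1]
      omega
    · show f (ℓ - 2 + 2) = f ℓ
      congr 1; omega
  | succ j hj ih =>
    intro f hf h0 hadd0 hadds hjl hrem
    obtain ⟨w, hw, hfj1⟩ := hadds j hj (by omega)
    obtain ⟨u, hu, hfj2⟩ := hrem
    by_cases huw : u = w
    · subst huw
      have hfjj : f (j + 1 + 1) = f j := by rw [hfj2, hfj1, Finset.erase_insert hw]
      refine ⟨fun i => if i < j then f i else f (i + 2), ?_, ⟨?_, ?_⟩, ?_, ?_⟩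
      · left; simp only [if_pos (show 0 < j by omega)]
      · intro i hi
        by_cases h : i < j
        · simp only [if_pos h]; exact hf.1 i (by omega)
        · simp only [if_neg h]; exact hf.1 (i + 2) (by omega)
      · intro i hi
        by_cases h1 : i < j
        · by_cases h2 : i + 1 < j
          · simp only [if_pos h1, if_pos h2]; exact hf.2 i (by omega)
          · simp only [if_pos h1, if_neg h2]
            have e2 : f (i + 1 + 2) = f (i + 1) := by
              rw [show i + 1 + 2 = (i+1) + 1 + 1 by omega, show i + 1 = j by omega, hfjj]
            rw [e2]; exact hf.2 i (by omega)
        · simp only [if_neg h1, if_neg (show ¬ i + 1 < j by omega)]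
          exact hf.2 (i + 2) (by omega)
      · simp only [if_pos (show 0 < j by omega)]; exact h0
      · simp only [if_neg (show ¬ ℓ - 2 < j by omega)]
        congr 1; omega
    · have huj : u ∈ f j := by
        rw [hfj1] at hu
        rcases Finset.mem_insert.mp hu with h | h
        · exact absurd h huw
        · exact h
      have hcard : ∀ i, i ≤ j + 1 → (f i).card = k + i := by
        intro i hi
        induction i with
        | zero => simpa using h0
        | succ n ihn =>
          have hn : (f n).card = k + n := ihn (by omega)
          have hstep : ∃ x, x ∉ f n ∧ f (n + 1) = insert x (f n) := by
            rcases Nat.eq_zero_or_pos n with h | h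
            · subst h; exact hadd0
            · by_cases hnj : n = j
              · subst hnj; exact ⟨w, hw, hfj1⟩
              · exact hadds n h (by omega)
          obtain ⟨x, hx, he⟩ := hstep
          rw [he, Finset.card_insert_of_notMem hx, hn]
          omega
      have hFtar : TARSeq G (k - 1) ℓ (fun i => if i = j + 1 then (f j).erase u else f i) := by
        constructor
        · intro i hi
          by_cases hij : i = j + 1
          · simp only [if_pos hij]
            constructor
            · exact (hf.1 j (by omega)).1.subset
                (by exact_mod_cast Finset.erase_subset _ _)
            · rw [Finset.card_erase_of_mem huj, hcard j (by omega)]; omega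
          · simp only [if_neg hij]; exact hf.1 i (by omega)
        · intro i hi
          by_cases hij : i = j
          · simp only [if_neg (show ¬ i = j + 1 by omega), if_pos (show i + 1 = j + 1 by omega)]
            rw [hij]
            exact Or.inr ⟨u, huj, rfl⟩
          · by_cases hij1 : i = j + 1
            · simp only [if_pos hij1, if_neg (show ¬ i + 1 = j + 1 by omega)]
              refine Or.inl ⟨w, ?_, ?_⟩
              · exact fun hmem => hw (Finset.mem_of_mem_erase hmem)
              · rw [show i + 1 = j + 1 + 1 by omega, hfj2, hfj1,
                  Finset.erase_insert_of_ne (fun h => huw h.symm)]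
            · simp only [if_neg hij1, if_neg (show ¬ i + 1 = j + 1 by omega)]
              exact hf.2 i hi
      have hFc0 : ((fun i => if i = j + 1 then (f j).erase u else f i) 0).card = k := by
        simp only [if_neg (show ¬ (0:ℕ) = j + 1 by omega)]; exact h0
      have hFadd0 : ∃ v, v ∉ (fun i => if i = j + 1 then (f j).erase u else f i) 0 ∧
          (fun i => if i = j + 1 then (f j).erase u else f i) 1 =
          insert v ((fun i => if i = j + 1 then (f j).erase u else f i) 0) := by
        simp only [if_neg (show ¬ (1:ℕ) = j + 1 by omega),
          if_neg (show ¬ (0:ℕ) = j + 1 by omega)]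
        exact hadd0
      have hFadds : ∀ i, 1 ≤ i → i < j →
          ∃ v, v ∉ (fun i => if i = j + 1 then (f j).erase u else f i) i ∧
          (fun i => if i = j + 1 then (f j).erase u else f i) (i + 1) =
          insert v ((fun i => if i = j + 1 then (f j).erase u else f i) i) := by
        intro i h1 h2
        simp only [if_neg (show ¬ i = j + 1 by omega), if_neg (show ¬ i + 1 = j + 1 by omega)]
        exact hadds i h1 (by omega)
      have hFrem : ∃ uu, uu ∈ (fun i => if i = j + 1 then (f j).erase u else f i) j ∧
          (fun i => if i = j + 1 then (f j).erase u else f i) (j + 1) =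
          ((fun i => if i = j + 1 then (f j).erase u else f i) j).erase uu := by
        refine ⟨u, ?_, ?_⟩
        · simp only [if_neg (show ¬ j = j + 1 by omega)]; exact huj
        · simp only [if_neg (show ¬ j = j + 1 by omega)]
          simp
      obtain ⟨g, hg1, hg2, hg3, hg4⟩ := ih _ hFtar hFc0 hFadd0 hFadds (by omega) hFrem
      refine ⟨g, ?_, hg2, hg3, ?_⟩
      · simpa only [if_neg (show ¬ (0:ℕ) = j + 1 by omega)] using hg1
      · simpa only [if_neg (show ¬ ℓ = j + 1 by omega)] using hg4
lemma tar_to_tj (G : SimpleGraph V) (k : ℕ) :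
    ∀ ℓ f, TARSeq G (k - 1) ℓ f → (f 0).card = k → (f ℓ).card = k →
    ∃ t g, TJSeq G t g ∧ g 0 = f 0 ∧ g t = f ℓ ∧ 2 * t ≤ ℓ := by
  intro ℓ
  induction ℓ using Nat.strong_induction_on with
  | _ ℓ ih =>
  intro f hf h0 hl
  classical
  rcases Nat.eq_zero_or_pos ℓ with rfl | hpos
  · exact ⟨0, f, ⟨fun i hi => (hf.1 i (by omega)).1, fun i hi => absurd hi (by omega)⟩,
      rfl, rfl, by omega⟩
  have key : ∃ g : ℕ → Finset V, (g 0 = f 0 ∨ TJStep (f 0) (g 0)) ∧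
      TARSeq G (k - 1) (ℓ - 2) g ∧ (g 0).card = k ∧ g (ℓ - 2) = f ℓ ∧ 2 ≤ ℓ := by
    rcases hf.2 0 hpos with ⟨v, hv, h1⟩ | ⟨v, hv, h1⟩
    · -- first step is an addition
      have h1 : f 1 = insert v (f 0) := h1
      have hcard1 : (f 1).card = k + 1 := by rw [h1, Finset.card_insert_of_notMem hv, h0]
      have hexists : ∃ m, 1 ≤ m ∧ m < ℓ ∧ ∃ u, u ∈ f m ∧ f (m + 1) = (f m).erase u := by
        by_contra hcon
        push_neg at hcon
        have hgrow : ∀ m, 1 ≤ m → m ≤ ℓ → k + m ≤ (f m).card := by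
          intro m
          induction m with
          | zero => omega
          | succ n ihn =>
            intro _ hle
            rcases Nat.eq_zero_or_pos n with rfl | hn
            · have e : (f (0 + 1)).card = k + 1 := hcard1
              omega
            · have hstep := hf.2 n (by omega)
              rcases hstep with ⟨x, hx, he⟩ | ⟨x, hx, he⟩
              · rw [he, Finset.card_insert_of_notMem hx]
                have := ihn hn (by omega)
                omega
              · exact absurd he (hcon n hn (by omega) x hx)
        have := hgrow ℓ hpos le_rfl
        omega
      have hspec := Nat.find_spec hexists
      set m₀ := Nat.find hexists with hm₀
      have hadds : ∀ i, 1 ≤ i → i < m₀ → ∃ x, x ∉ f i ∧ f (i + 1) = insert x (f i) := by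
        intro i h1i h2i
        rcases hf.2 i (by omega) with h | ⟨x, hx, he⟩
        · exact h
        · exact absurd ⟨h1i, by omega, x, hx, he⟩ (Nat.find_min hexists h2i)
      obtain ⟨g, hg1, hg2, hg3, hg4⟩ := red G k ℓ m₀ hspec.1 f hf h0 ⟨v, hv, h1⟩
        hadds hspec.2.1 hspec.2.2
      exact ⟨g, hg1, hg2, hg3, hg4, by omega⟩
    · -- first step is a removal
      have h1 : f 1 = (f 0).erase v := h1
      have hk1 : 1 ≤ k := by
        have := Finset.card_pos.mpr ⟨v, hv⟩
        omega
      have hcard1 : (f 1).card = k - 1 := by rw [h1, Finset.card_erase_of_mem hv, h0]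
      have hl2 : 2 ≤ ℓ := by
        by_contra hcon
        have : ℓ = 1 := by omega
        rw [this] at hl
        omega
      obtain ⟨w, hw, h2⟩ : ∃ w, w ∉ f 1 ∧ f 2 = insert w (f 1) := by
        rcases hf.2 1 (by omega) with h | ⟨u, hu, h2⟩
        · exact h
        · exfalso
          have hu1 : 0 < (f 1).card := Finset.card_pos.mpr ⟨u, hu⟩
          have h2c : (f 2).card = (f 1).card - 1 := by
            rw [show (2:ℕ) = 1 + 1 from rfl, h2, Finset.card_erase_of_mem hu]
          have := (hf.1 2 (by omega)).2
          omega
      refine ⟨fun i => f (i + 2), ?_, ⟨fun i hi => hf.1 (i + 2) (by omega),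
        fun i hi => hf.2 (i + 2) (by omega)⟩, ?_, ?_, hl2⟩
      · by_cases hwv : w = v
        · left
          show f (0 + 2) = f 0
          rw [show (0:ℕ) + 2 = 2 from rfl, h2, h1, hwv, Finset.insert_erase hv]
        · right
          have hw0 : w ∉ f 0 := by
            rw [h1] at hw
            exact fun hmem => hw (Finset.mem_erase.mpr ⟨hwv, hmem⟩)
          refine ⟨v, hv, w, hw0, ?_⟩
          show f (0 + 2) = insert w ((f 0).erase v)
          rw [show (0:ℕ) + 2 = 2 from rfl, h2, h1]
      · show (f (0 + 2)).card = k
        rw [show (0:ℕ) + 2 = 2 from rfl, h2, Finset.card_insert_of_notMem hw, hcard1]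
        omega
      · show f (ℓ - 2 + 2) = f ℓ
        congr 1; omega
  obtain ⟨g, hgd, hgt, hgc, hge, hl2⟩ := key
  obtain ⟨t, h, hh, hh0, hht, hlen⟩ := ih (ℓ - 2) (by omega) g hgt hgc (by rw [hge]; exact hl)
  rcases hgd with heq | hstep
  · exact ⟨t, h, hh, by rw [hh0, heq], by rw [hht, hge], by omega⟩
  · refine ⟨t + 1, fun i => if i = 0 then f 0 else h (i - 1), ⟨?_, ?_⟩, by simp, ?_, by omega⟩
    · intro i hi
      by_cases h0' : i = 0
      · simp only [if_pos h0']
        exact (hf.1 0 (by omega)).1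
      · simp only [if_neg h0']
        exact hh.1 (i - 1) (by omega)
    · intro i hi
      by_cases h0' : i = 0
      · simp only [h0', if_pos rfl, if_neg (show ¬ (0:ℕ) + 1 = 0 by omega)]
        show TJStep (f 0) (h (0 + 1 - 1))
        rw [show (0:ℕ) + 1 - 1 = 0 from rfl, hh0]
        exact hstep
      · simp only [if_neg h0', if_neg (show ¬ i + 1 = 0 by omega)]
        have e : i + 1 - 1 = (i - 1) + 1 := by omega
        rw [e]
        exact hh.2 (i - 1) (by omega)
    · simp only [if_neg (show ¬ t + 1 = 0 by omega)]
      show h (t + 1 - 1) = f ℓ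
      rw [show t + 1 - 1 = t from rfl, hht, hge]

theorem stmt5 (G : SimpleGraph V) (C C' : Finset V) (k : ℕ)
    (hC : C.card = k) (hC' : C'.card = k) :
    ((∃ (ℓ : ℕ) (f : ℕ → Finset V), TJSeq G ℓ f ∧ f 0 = C ∧ f ℓ = C') ↔
      (∃ (ℓ : ℕ) (f : ℕ → Finset V), TARSeq G (k - 1) ℓ f ∧ f 0 = C ∧ f ℓ = C')) ∧
    (∀ dtj dtar : ℕ,
      IsLeast {ℓ | ∃ f : ℕ → Finset V, TJSeq G ℓ f ∧ f 0 = C ∧ f ℓ = C'} dtj →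
      IsLeast {ℓ | ∃ f : ℕ → Finset V, TARSeq G (k - 1) ℓ f ∧ f 0 = C ∧ f ℓ = C'} dtar →
      2 * dtj = dtar) := by
  constructor
  · constructor
    · rintro ⟨ℓ, f, htj, h0, hl⟩
      obtain ⟨g, hg, hg0, hgl⟩ := tj_to_tar G k ℓ f htj (by rw [h0, hC])
      exact ⟨2 * ℓ, g, hg, by rw [hg0, h0], by rw [hgl, hl]⟩
    · rintro ⟨ℓ, f, htar, h0, hl⟩
      obtain ⟨t, g, hg, hg0, hgt, _⟩ := tar_to_tj G k ℓ f htar (by rw [h0, hC]) (by rw [hl, hC'])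
      exact ⟨t, g, hg, by rw [hg0, h0], by rw [hgt, hl]⟩
  · rintro dtj dtar ⟨⟨f, htj, h0, hl⟩, htjlb⟩ ⟨⟨f', htar, h0', hl'⟩, htarlb⟩
    obtain ⟨g, hg, hg0, hgl⟩ := tj_to_tar G k dtj f htj (by rw [h0, hC])
    have h1 : dtar ≤ 2 * dtj := htarlb ⟨g, hg, by rw [hg0, h0], by rw [hgl, hl]⟩
    obtain ⟨t, g', hg', hg0', hgt', hle⟩ := tar_to_tj G k dtar f' htar
      (by rw [h0', hC]) (by rw [hl', hC'])
    have h2 : dtj ≤ t := htjlb ⟨g', hg', by rw [hg0', h0'], by rw [hgt', hl']⟩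
    omega
end

section
/- Let G be a simple graph, k a nonnegative integer, and let C_0, C_1, ..., C_ℓ be a TAR(k)-sequence of cliques in G. For each i choose a maximal clique M_i of G containing C_i, and let H be the graph on the vertex set of maximal cliques of G where two maximal cliques M, M' are adjacent when |M ∩ M'| ≥ k. Then M_0 and M_ℓ lie in the same connected component of H. -/
variable {V : Type*} [DecidableEq V]

/-- A maximal clique of `G`. -/
def IsMaximalClique (G : SimpleGraph V) (M : Finset V) : Prop :=
  G.IsClique (M : Set V) ∧
    ∀ D : Finset V, G.IsClique (D : Set V) → M ⊆ D → M = D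

/-- The `k`-intersection maximal-clique graph: vertices are the maximal cliques of `G`,
two distinct maximal cliques being adjacent when their intersection has at least `k` vertices. -/
def MCGraph (G : SimpleGraph V) (k : ℕ) :
    SimpleGraph {M : Finset V // IsMaximalClique G M} where
  Adj M M' := M ≠ M' ∧ k ≤ (M.1 ∩ M'.1).card
  symm := by
    constructor; intro M M' h
    exact ⟨h.1.symm, by rw [Finset.inter_comm]; exact h.2⟩
  loopless := by constructor; intro M h; exact h.1 rfl

theorem stmt9 (G : SimpleGraph V) (k ℓ : ℕ) (f : ℕ → Finset V)
    (hf : TARSeq G k ℓ f)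
    (M : ℕ → {M : Finset V // IsMaximalClique G M})
    (hM : ∀ i ≤ ℓ, f i ⊆ (M i).1) :
    (MCGraph G k).Reachable (M 0) (M ℓ) := by
  obtain ⟨hcl, hstep⟩ := hf
  suffices h : ∀ i ≤ ℓ, (MCGraph G k).Reachable (M 0) (M i) from h ℓ le_rfl
  intro i hi
  induction i with
  | zero => exact SimpleGraph.Reachable.refl _
  | succ n ih =>
    have hn : n ≤ ℓ := Nat.le_of_succ_le hi
    refine (ih hn).trans ?_
    by_cases he : M n = M (n + 1)
    · rw [he]
    · apply SimpleGraph.Adj.reachable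
      refine ⟨he, ?_⟩
      rcases hstep n hi with ⟨v, hv, hins⟩ | ⟨v, hv, hers⟩
      · have hsub : f n ⊆ (M n).1 ∩ (M (n + 1)).1 := by
          apply Finset.subset_inter (hM n hn)
          refine subset_trans ?_ (hM (n + 1) hi)
          rw [hins]; exact Finset.subset_insert _ _
        exact le_trans (hcl n hn).2 (Finset.card_le_card hsub)
      · have hsub : f (n + 1) ⊆ (M n).1 ∩ (M (n + 1)).1 := by
          apply Finset.subset_inter ?_ (hM (n + 1) hi)
          refine subset_trans ?_ (hM n hn)
          rw [hers]; exact Finset.erase_subset _ _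
        exact le_trans (hcl (n + 1) hi).2 (Finset.card_le_card hsub)
end

section
/- Let G be a chordal graph and let C_0, C_1, ..., C_ℓ be a shortest TAR(k)-sequence of cliques in G. If a vertex v belongs to both C_p and C_q for indices p < q, then v belongs to C_i for every i with p ≤ i ≤ q. -/
variable {V : Type*} [DecidableEq V]

/-- `G` is chordal: it has no induced cycle of length at least four. -/
def IsChordal (G : SimpleGraph V) : Prop :=
  ∀ n, 4 ≤ n → ∀ f : Fin n → V, Function.Injective f →
    ¬ (∀ i j : Fin n, G.Adj (f i) (f j) ↔
        ((i.val + 1) % n = j.val ∨ (j.val + 1) % n = i.val))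

lemma key {G : SimpleGraph V} (hch : IsChordal G) :
    ∀ (r : ℕ) (c : ℕ → V) (v x y : V), G.Adj v x → G.Adj v y → x ≠ y → ¬ G.Adj x y →
    1 ≤ r → (∀ i, i < r → ¬ G.Adj v (c i)) → (∀ i, i < r → c i ≠ v) →
    (∀ i, i + 1 < r → G.Adj (c i) (c (i+1))) → G.Adj x (c 0) → G.Adj (c (r-1)) y → False := by
  intro r
  induction r using Nat.strong_induction_on with
  | _ r IH =>
  intro c v x y hvx hvy hne hxy hr hnadj hnev hchain hx0 hlast
  -- minimality facts
  have P1 : ∀ i, 0 < i → i < r → ¬ G.Adj x (c i) := by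
    intro i hi0 hir hadj
    refine IH (r - i) (by omega) (fun t => c (t + i)) v x y hvx hvy hne hxy (by omega)
      (fun t ht => hnadj _ (by omega)) (fun t ht => hnev _ (by omega))
      (fun t ht => by
        show G.Adj (c (t + i)) (c (t + 1 + i))
        rw [(by omega : t + 1 + i = t + i + 1)]
        exact hchain _ (by omega))
      (by simpa using hadj) ?_
    show G.Adj (c (r - i - 1 + i)) y
    rw [(by omega : r - i - 1 + i = r - 1)]; exact hlast
  have P2 : ∀ i, i < r - 1 → ¬ G.Adj (c i) y := by
    intro i hi hadj
    refine IH (i + 1) (by omega) c v x y hvx hvy hne hxy (by omega)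
      (fun t ht => hnadj _ (by omega)) (fun t ht => hnev _ (by omega))
      (fun t ht => hchain _ (by omega)) hx0 (by simpa using hadj)
  have P3 : ∀ i j, i + 1 < j → j < r → ¬ G.Adj (c i) (c j) := by
    intro i j hij hjr hadj
    refine IH (r - (j - i - 1)) (by omega) (fun t => if t ≤ i then c t else c (t + (j - i - 1)))
      v x y hvx hvy hne hxy (by omega) ?_ ?_ ?_ ?_ ?_
    · intro t ht
      show ¬ G.Adj v (if t ≤ i then c t else c (t + (j - i - 1)))
      split <;> [exact hnadj _ (by omega); exact hnadj _ (by omega)]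
    · intro t ht
      show (if t ≤ i then c t else c (t + (j - i - 1))) ≠ v
      split <;> [exact hnev _ (by omega); exact hnev _ (by omega)]
    · intro t ht
      show G.Adj (if t ≤ i then c t else c (t + (j - i - 1)))
        (if t + 1 ≤ i then c (t + 1) else c (t + 1 + (j - i - 1)))
      rcases lt_trichotomy t i with h | h | h
      · rw [if_pos (by omega), if_pos (by omega)]; exact hchain _ (by omega)
      · subst h
        rw [if_pos le_rfl, if_neg (by omega), (by omega : t + 1 + (j - t - 1) = j)]
        exact hadj
      · rw [if_neg (by omega), if_neg (by omega),
          (by omega : t + 1 + (j - i - 1) = t + (j - i - 1) + 1)]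
        exact hchain _ (by omega)
    · show G.Adj x (if 0 ≤ i then c 0 else c (0 + (j - i - 1)))
      rw [if_pos (by omega)]; exact hx0
    · show G.Adj (if r - (j - i - 1) - 1 ≤ i then c (r - (j - i - 1) - 1)
        else c (r - (j - i - 1) - 1 + (j - i - 1))) y
      rw [if_neg (by omega), (by omega : r - (j - i - 1) - 1 + (j - i - 1) = r - 1)]
      exact hlast
  have P4 : ∀ i j, i < j → j < r → c i ≠ c j := by
    intro i j hij hjr heq
    rcases eq_or_lt_of_le (Nat.succ_le_of_lt hij) with h | h
    · have h2 : G.Adj (c i) (c j) := by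
        rw [(by omega : j = i + 1)]; exact hchain i (by omega)
      rw [← heq] at h2
      exact G.irrefl h2
    · rcases eq_or_lt_of_le (Nat.succ_le_of_lt hjr) with hj | hj
      · have hj' : j = r - 1 := by omega
        refine IH (i + 1) (by omega) c v x y hvx hvy hne hxy (by omega)
          (fun t ht => hnadj _ (by omega)) (fun t ht => hnev _ (by omega))
          (fun t ht => hchain _ (by omega)) hx0 ?_
        simp only [Nat.add_sub_cancel]
        rw [heq, hj']; exact hlast
      · refine IH (r - (j - i)) (by omega) (fun t => if t ≤ i then c t else c (t + (j - i)))
          v x y hvx hvy hne hxy (by omega) ?_ ?_ ?_ ?_ ?_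
        · intro t ht
          show ¬ G.Adj v (if t ≤ i then c t else c (t + (j - i)))
          split <;> [exact hnadj _ (by omega); exact hnadj _ (by omega)]
        · intro t ht
          show (if t ≤ i then c t else c (t + (j - i))) ≠ v
          split <;> [exact hnev _ (by omega); exact hnev _ (by omega)]
        · intro t ht
          show G.Adj (if t ≤ i then c t else c (t + (j - i)))
            (if t + 1 ≤ i then c (t + 1) else c (t + 1 + (j - i)))
          rcases lt_trichotomy t i with h' | h' | h'
          · rw [if_pos (by omega), if_pos (by omega)]; exact hchain _ (by omega)
          · subst h'
            rw [if_pos le_rfl, if_neg (by omega), (by omega : t + 1 + (j - t) = j + 1), heq]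
            exact hchain _ (by omega)
          · rw [if_neg (by omega), if_neg (by omega),
              (by omega : t + 1 + (j - i) = t + (j - i) + 1)]
            exact hchain _ (by omega)
        · show G.Adj x (if 0 ≤ i then c 0 else c (0 + (j - i)))
          rw [if_pos (by omega)]; exact hx0
        · show G.Adj (if r - (j - i) - 1 ≤ i then c (r - (j - i) - 1)
            else c (r - (j - i) - 1 + (j - i))) y
          rw [if_neg (by omega), (by omega : r - (j - i) - 1 + (j - i) = r - 1)]
          exact hlast
  -- build the cycle
  set n := r + 3 with hn
  set cyc : ℕ → V := fun t => if t = 0 then v else if t = 1 then x else if t ≤ r + 1 then c (t - 2) else y with hcyc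
  have hc0 : cyc 0 = v := rfl
  have hc1 : cyc 1 = x := rfl
  have hcm : ∀ t, 2 ≤ t → t ≤ r + 1 → cyc t = c (t - 2) := by
    intro t h2 h1
    show (if t = 0 then v else if t = 1 then x else if t ≤ r + 1 then c (t - 2) else y) = c (t - 2)
    rw [if_neg (by omega), if_neg (by omega), if_pos h1]
  have hcl : cyc (r + 2) = y := by
    show (if r + 2 = 0 then v else if r + 2 = 1 then x else if r + 2 ≤ r + 1 then c (r + 2 - 2) else y) = y
    rw [if_neg (by omega), if_neg (by omega), if_neg (by omega)]
  -- distinctness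
  have cycInj : ∀ s t, s < t → t < n → cyc s ≠ cyc t := by
    have hvc : ∀ i, i < r → v ≠ c i := fun i hi h => (hnev i hi) h.symm
    have hxc : ∀ i, i < r → x ≠ c i := by
      intro i hi h; exact hnadj i hi (h ▸ hvx)
    have hyc : ∀ i, i < r → y ≠ c i := by
      intro i hi h; exact hnadj i hi (h ▸ hvy)
    intro s t hst htn
    by_cases hs0 : s = 0
    · subst hs0; rw [hc0]
      by_cases ht1 : t = 1
      · rw [ht1, hc1]; exact hvx.ne
      by_cases htm : t ≤ r + 1
      · rw [hcm t (by omega) htm]; exact hvc _ (by omega)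
      · rw [(by omega : t = r + 2), hcl]; exact hvy.ne
    by_cases hs1 : s = 1
    · subst hs1; rw [hc1]
      by_cases htm : t ≤ r + 1
      · rw [hcm t (by omega) htm]; exact hxc _ (by omega)
      · rw [(by omega : t = r + 2), hcl]; exact hne
    by_cases hsm : s ≤ r + 1
    · rw [hcm s (by omega) hsm]
      by_cases htm : t ≤ r + 1
      · rw [hcm t (by omega) htm]; exact P4 _ _ (by omega) (by omega)
      · rw [(by omega : t = r + 2), hcl]; exact fun h => hyc _ (by omega) h.symm
    · omega
  -- forward edges
  have F : ∀ t, t + 1 < n → G.Adj (cyc t) (cyc (t + 1)) := by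
    intro t htn
    by_cases h0 : t = 0
    · subst h0; rw [hc0, hc1]; exact hvx
    by_cases h1 : t = 1
    · subst h1; rw [hc1, hcm 2 le_rfl (by omega)]; exact hx0
    by_cases hm : t ≤ r
    · rw [hcm t (by omega) (by omega), hcm (t+1) (by omega) (by omega),
        (by omega : t + 1 - 2 = t - 2 + 1)]
      exact hchain _ (by omega)
    · rw [(by omega : t = r + 1)]
      rw [hcm (r+1) (by omega) le_rfl, (by omega : r + 1 + 1 = r + 2), hcl,
        (by omega : r + 1 - 2 = r - 1)]
      exact hlast
  -- non-edges
  have H : ∀ s t, s < t → t < n → t ≠ s + 1 → ¬ (s = 0 ∧ t = n - 1) → ¬ G.Adj (cyc s) (cyc t) := by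
    intro s t hst htn hts hlastpair
    by_cases hs0 : s = 0
    · subst hs0; rw [hc0]
      have ht : 2 ≤ t ∧ t ≤ r + 1 := by
        constructor
        · omega
        · by_contra h
          exact hlastpair ⟨rfl, by omega⟩
      rw [hcm t ht.1 ht.2]; exact hnadj _ (by omega)
    by_cases hs1 : s = 1
    · subst hs1; rw [hc1]
      by_cases htm : t ≤ r + 1
      · rw [hcm t (by omega) htm]; exact P1 _ (by omega) (by omega)
      · rw [(by omega : t = r + 2), hcl]; exact hxy
    by_cases hsm : s ≤ r + 1
    · rw [hcm s (by omega) hsm]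
      by_cases htm : t ≤ r + 1
      · rw [hcm t (by omega) htm]; exact P3 _ _ (by omega) (by omega)
      · have hs2 : s ≤ r := by omega
        rw [(by omega : t = r + 2), hcl]; exact P2 _ (by omega)
    · omega
  -- assemble
  have hiff : ∀ s t, s < n → t < n →
      (G.Adj (cyc s) (cyc t) ↔ ((s + 1) % n = t ∨ (t + 1) % n = s)) := by
    have main : ∀ s t, s < t → t < n →
        (G.Adj (cyc s) (cyc t) ↔ (t = s + 1 ∨ (s = 0 ∧ t = n - 1))) := by
      intro s t hst htn
      constructor
      · intro hadj
        by_contra h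
        push_neg at h
        exact H s t hst htn h.1 (fun hh => h.2 hh.1 hh.2) hadj
      · rintro (h | ⟨h0, h1⟩)
        · subst h; exact F s (by omega)
        · subst h0
          rw [hn] at h1
          rw [(by omega : t = r + 2), hc0, hcl]; exact hvy
    intro s t hsn htn
    have hmod : ∀ a b : ℕ, a < n → b < n → ((a + 1) % n = b ↔ (b = a + 1 ∨ (a = n - 1 ∧ b = 0))) := by
      intro a b ha hb
      rcases Nat.lt_or_ge (a+1) n with hh | hh
      · rw [Nat.mod_eq_of_lt hh]; omega
      · have : a + 1 = n := by omega
        rw [this, Nat.mod_self]; omega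
    rcases lt_trichotomy s t with h | h | h
    · rw [main s t h htn, hmod s t hsn htn, hmod t s htn hsn]; omega
    · subst h
      constructor
      · intro hadj; exact absurd hadj (G.irrefl)
      · rw [hmod s s hsn hsn]; omega
    · rw [show (G.Adj (cyc s) (cyc t)) ↔ (G.Adj (cyc t) (cyc s)) from
        ⟨SimpleGraph.Adj.symm, SimpleGraph.Adj.symm⟩, main t s h hsn,
        hmod s t hsn htn, hmod t s htn hsn]
      omega
  refine hch n (by omega) (fun i => cyc i.val) ?_ ?_
  · intro i j hij
    by_contra hne'
    rcases lt_trichotomy i.val j.val with h | h | h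
    · exact cycInj _ _ h j.isLt hij
    · exact hne' (Fin.ext h)
    · exact cycInj _ _ h i.isLt hij.symm
  · intro i j
    exact hiff i.val j.val i.isLt j.isLt

/-- the dive lemma: a segment that leaves N(v) and returns connects its endpoints into a clique -/
lemma dive_clique {G : SimpleGraph V} (hch : IsChordal G) (v : V) (C : ℕ → Finset V)
    (t u : ℕ) (htu : t + 1 < u)
    (hsteps : ∀ j, t ≤ j → j < u → TARStep (C j) (C (j + 1)))
    (hclq : ∀ j, t ≤ j → j ≤ u → G.IsClique (C j : Set V))
    (hv : ∀ j, t ≤ j → j ≤ u → v ∉ C j)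
    (hCt : ∀ z ∈ C t, G.Adj v z)
    (hCu : ∀ z ∈ C u, G.Adj v z)
    (hout : ∀ j, t < j → j < u → ∃ w ∈ C j, ¬ G.Adj v w)
    {x y : V} (hx : x ∈ C t) (hy : y ∈ C u) :
    x = y ∨ G.Adj x y := by
  classical
  by_contra hcon
  push_neg at hcon
  obtain ⟨hne, hxy⟩ := hcon
  have hvx : G.Adj v x := hCt x hx
  have hvy : G.Adj v y := hCu y hy
  -- build the chain
  have aux : ∀ j, t < j → j < u → ∃ r, ∃ c : ℕ → V, 1 ≤ r ∧
      (∀ i, i < r → ¬ G.Adj v (c i)) ∧ (∀ i, i < r → c i ≠ v) ∧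
      (∀ i, i + 1 < r → G.Adj (c i) (c (i + 1))) ∧ G.Adj x (c 0) ∧ c (r - 1) ∈ C j := by
    intro j hj1 hj2
    induction j with
    | zero => omega
    | succ j IHj =>
      rcases Nat.lt_or_ge t j with hlt | hge
      · -- j > t : extend chain from j
        obtain ⟨r, c, hr, h1, h2, h3, h4, h5⟩ := IHj hlt (by omega)
        rcases hsteps j (by omega) (by omega) with ⟨z, hz, hzC⟩ | ⟨z, hz, hzC⟩
        · -- insert
          exact ⟨r, c, hr, h1, h2, h3, h4, by rw [hzC]; exact Finset.mem_insert_of_mem h5⟩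
        · -- erase
          by_cases hwz : c (r - 1) = z
          · obtain ⟨w', hw'1, hw'2⟩ := hout (j + 1) (by omega) (by omega)
            have hw'j : w' ∈ C j := by rw [hzC] at hw'1; exact Finset.mem_of_mem_erase hw'1
            have hww' : c (r - 1) ≠ w' := by
              intro h
              rw [hzC] at hw'1
              rw [← h, hwz] at hw'1
              exact (Finset.notMem_erase z (C j)) hw'1
            have hadj : G.Adj (c (r - 1)) w' := hclq j (by omega) (by omega) h5 hw'j hww'
            refine ⟨r + 1, fun i => if i < r then c i else w', by omega, ?_, ?_, ?_, ?_, ?_⟩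
            · intro i hi
              show ¬ G.Adj v (if i < r then c i else w')
              split <;> [exact h1 _ (by omega); exact hw'2]
            · intro i hi
              show (if i < r then c i else w') ≠ v
              split
              · exact h2 _ (by omega)
              · intro h; exact hv (j+1) (by omega) (by omega) (h ▸ hw'1)
            · intro i hi
              show G.Adj (if i < r then c i else w') (if i + 1 < r then c (i + 1) else w')
              rcases Nat.lt_or_ge (i + 1) r with h | h
              · rw [if_pos (by omega), if_pos h]; exact h3 _ h
              · have hir : i = r - 1 := by omega
                rw [if_pos (by omega), if_neg (by omega), hir]; exact hadj
            · show G.Adj x (if 0 < r then c 0 else w')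
              rw [if_pos (by omega)]; exact h4
            · show (if r + 1 - 1 < r then c (r + 1 - 1) else w') ∈ C (j + 1)
              rw [if_neg (by omega)]; exact hw'1
          · refine ⟨r, c, hr, h1, h2, h3, h4, ?_⟩
            rw [hzC]
            exact Finset.mem_erase_of_ne_of_mem hwz h5
      · -- base case j + 1 = t + 1
        have hjt : j = t := by omega
        subst hjt
        obtain ⟨w, hw1, hw2⟩ := hout (j + 1) (by omega) (by omega)
        have hCj1 : C j ⊆ C (j + 1) := by
          rcases hsteps j le_rfl (by omega) with ⟨z, hz, hzC⟩ | ⟨z, hz, hzC⟩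
          · rw [hzC]; exact Finset.subset_insert _ _
          · exfalso
            have hwj : w ∈ C j := by
              rw [hzC] at hw1; exact Finset.mem_of_mem_erase hw1
            exact hw2 (hCt w hwj)
        have hxw : x ≠ w := by
          intro h; exact hw2 (h ▸ hvx)
        have hadj : G.Adj x w := hclq (j+1) (by omega) (by omega) (hCj1 hx) hw1 hxw
        refine ⟨1, fun _ => w, le_rfl, fun i hi => hw2, ?_, fun i hi => by omega, hadj, hw1⟩
        intro i hi h
        exact hv (j+1) (by omega) (by omega) (h ▸ hw1)
  -- conclude at u - 1
  obtain ⟨r, c, hr, h1, h2, h3, h4, h5⟩ := aux (u - 1) (by omega) (by omega)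
  have hstep : TARStep (C (u - 1)) (C u) := by
    have := hsteps (u - 1) (by omega) (by omega)
    rwa [(by omega : u - 1 + 1 = u)] at this
  have hyCu1 : y ∈ C (u - 1) := by
    rcases hstep with ⟨z, hz, hzC⟩ | ⟨z, hz, hzC⟩
    · exfalso
      have : c (r - 1) ∈ C u := by
        rw [hzC]
        exact Finset.mem_insert_of_mem h5
      exact h1 (r - 1) (by omega) (hCu _ this)
    · rw [hzC] at hy; exact Finset.mem_of_mem_erase hy
  have hwy : c (r - 1) ≠ y := by
    intro h; exact h1 (r - 1) (by omega) (h ▸ hvy)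
  have hlast : G.Adj (c (r - 1)) y := hclq (u - 1) (by omega) (by omega) h5 hyCu1 hwy
  exact key hch r c v x y hvx hvy hne hxy hr h1 h2 h3 h4 hlast

lemma TARStep.symm' {A B : Finset V} (h : TARStep A B) : TARStep B A := by
  rcases h with ⟨w, hw, rfl⟩ | ⟨w, hw, rfl⟩
  · right
    exact ⟨w, Finset.mem_insert_self _ _, by rw [Finset.erase_insert hw]⟩
  · left
    exact ⟨w, Finset.notMem_erase _ _, by rw [Finset.insert_erase hw]⟩

lemma TARStep.sdiff_bound {A B S : Finset V} (h : TARStep A B) :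
    (A \ S).card + (S \ A).card ≤ (B \ S).card + (S \ B).card + 1 := by
  rcases h with ⟨w, hw, rfl⟩ | ⟨w, hw, rfl⟩
  · have h1 : A \ S ⊆ insert w A \ S := by
      intro z hz
      simp only [Finset.mem_sdiff, Finset.mem_insert] at *
      tauto
    have h2 : S \ A ⊆ insert w (S \ insert w A) := by
      intro z hz
      simp only [Finset.mem_sdiff, Finset.mem_insert] at *
      tauto
    calc (A \ S).card + (S \ A).card
        ≤ (insert w A \ S).card + (insert w (S \ insert w A)).card :=
          Nat.add_le_add (Finset.card_le_card h1) (Finset.card_le_card h2)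
      _ ≤ (insert w A \ S).card + ((S \ insert w A).card + 1) :=
          Nat.add_le_add_left (Finset.card_insert_le _ _) _
      _ = (insert w A \ S).card + (S \ insert w A).card + 1 := by omega
  · have h1 : A \ S ⊆ insert w (A.erase w \ S) := by
      intro z hz
      simp only [Finset.mem_sdiff, Finset.mem_insert, Finset.mem_erase] at *
      by_cases hzw : z = w
      · tauto
      · tauto
    have h2 : S \ A ⊆ S \ A.erase w := by
      intro z hz
      simp only [Finset.mem_sdiff, Finset.mem_erase] at *
      tauto
    calc (A \ S).card + (S \ A).card
        ≤ (insert w (A.erase w \ S)).card + (S \ A.erase w).card :=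
          Nat.add_le_add (Finset.card_le_card h1) (Finset.card_le_card h2)
      _ ≤ ((A.erase w \ S).card + 1) + (S \ A.erase w).card :=
          Nat.add_le_add_right (Finset.card_insert_le _ _) _
      _ = (A.erase w \ S).card + (S \ A.erase w).card + 1 := by omega

lemma TARStep.insert_v {A B : Finset V} {v : V} (h : TARStep A B) (hA : v ∉ A) (hB : v ∉ B) :
    TARStep (insert v A) (insert v B) := by
  rcases h with ⟨w, hw, rfl⟩ | ⟨w, hw, rfl⟩
  · have hwv : w ≠ v := by
      intro h; subst h; exact hB (Finset.mem_insert_self _ _)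
    left
    refine ⟨w, ?_, ?_⟩
    · simp only [Finset.mem_insert]
      push_neg
      exact ⟨hwv, hw⟩
    · rw [Finset.insert_comm]
  · have hwv : w ≠ v := by
      intro h; subst h; exact hA hw
    right
    refine ⟨w, Finset.mem_insert_of_mem hw, ?_⟩
    rw [Finset.erase_insert_of_ne (Ne.symm hwv)]

/-- a sequence with a pointwise extra property -/
def PSeq (G : SimpleGraph V) (k : ℕ) (P : Finset V → Prop) (m : ℕ) (C : ℕ → Finset V) : Prop :=
  (∀ i ≤ m, G.IsClique (C i : Set V) ∧ k ≤ (C i).card ∧ P (C i)) ∧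
  ∀ i < m, TARStep (C i) (C (i + 1))

lemma PSeq.splice {G : SimpleGraph V} {k : ℕ} {P : Finset V → Prop} {m1 m2 : ℕ}
    {C D : ℕ → Finset V} (hC : PSeq G k P m1 C) (hD : PSeq G k P m2 D) (hlink : C m1 = D 0) :
    PSeq G k P (m1 + m2) (fun i => if i ≤ m1 then C i else D (i - m1)) := by
  constructor
  · intro i hi
    show G.IsClique ((if i ≤ m1 then C i else D (i - m1) : Finset V) : Set V) ∧
      k ≤ (if i ≤ m1 then C i else D (i - m1)).card ∧ P (if i ≤ m1 then C i else D (i - m1))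
    by_cases h : i ≤ m1
    · rw [if_pos h]; exact hC.1 i h
    · rw [if_neg h]; exact hD.1 _ (by omega)
  · intro i hi
    show TARStep (if i ≤ m1 then C i else D (i - m1))
      (if i + 1 ≤ m1 then C (i + 1) else D (i + 1 - m1))
    rcases lt_trichotomy i m1 with h | h | h
    · rw [if_pos (by omega), if_pos (by omega)]; exact hC.2 i h
    · subst h
      rw [if_pos le_rfl, if_neg (by omega), (by omega : i + 1 - i = 1), hlink]
      exact hD.2 0 (by omega)
    · rw [if_neg (by omega), if_neg (by omega), (by omega : i + 1 - m1 = i - m1 + 1)]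
      exact hD.2 (i - m1) (by omega)

/-- monotone direct path between two cliques whose union is a clique -/
lemma mono_path {G : SimpleGraph V} (k : ℕ) :
    ∀ d (A B : Finset V), (A \ B).card + (B \ A).card = d →
    G.IsClique ((A ∪ B : Finset V) : Set V) → k ≤ A.card → k ≤ B.card →
    ∃ D : ℕ → Finset V, D 0 = A ∧ D d = B ∧
      (∀ i ≤ d, G.IsClique ((D i : Finset V) : Set V) ∧ k ≤ (D i).card ∧ D i ⊆ A ∪ B) ∧
      (∀ i < d, TARStep (D i) (D (i + 1))) := by
  intro d
  induction d with
  | zero =>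
    intro A B hd hclq hA hB
    have hAB : A = B := by
      have h1 : A \ B = ∅ := Finset.card_eq_zero.mp (by omega)
      have h2 : B \ A = ∅ := Finset.card_eq_zero.mp (by omega)
      apply Finset.Subset.antisymm
      · intro z hz
        by_contra hzB
        have : z ∈ A \ B := Finset.mem_sdiff.mpr ⟨hz, hzB⟩
        rw [h1] at this; exact absurd this (Finset.notMem_empty z)
      · intro z hz
        by_contra hzA
        have : z ∈ B \ A := Finset.mem_sdiff.mpr ⟨hz, hzA⟩
        rw [h2] at this; exact absurd this (Finset.notMem_empty z)
    exact ⟨fun _ => A, rfl, hAB ▸ rfl,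
      fun i hi => ⟨hclq.subset (by simp [Finset.coe_subset]), hA, Finset.subset_union_left⟩,
      fun i hi => by omega⟩
  | succ d IH =>
    intro A B hd hclq hA hB
    rcases (B \ A).eq_empty_or_nonempty with hBA | ⟨w, hw⟩
    · -- B ⊆ A, remove a vertex of A \ B
      have hBsubA : B ⊆ A := by
        intro z hz
        by_contra h
        have : z ∈ B \ A := Finset.mem_sdiff.mpr ⟨hz, h⟩
        rw [hBA] at this; exact absurd this (Finset.notMem_empty z)
      have hABne : (A \ B).Nonempty := by
        apply Finset.card_pos.mp
        rw [hBA] at hd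
        simp at hd
        omega
      obtain ⟨w, hw⟩ := hABne
      rw [Finset.mem_sdiff] at hw
      have hrec : ((A.erase w) \ B).card + (B \ A.erase w).card = d := by
        have e1 : A.erase w \ B = (A \ B).erase w := by
          ext z
          simp only [Finset.mem_sdiff, Finset.mem_erase]
          tauto
        have e2 : B \ A.erase w = B \ A := by
          ext z
          simp only [Finset.mem_sdiff, Finset.mem_erase]
          constructor
          · rintro ⟨hz, h⟩
            refine ⟨hz, fun hzA => h ⟨fun he => hw.2 (he ▸ hz), hzA⟩⟩
          · rintro ⟨hz, h⟩
            exact ⟨hz, fun hh => h hh.2⟩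
        rw [e1, e2, hBA]
        simp only [Finset.card_empty]
        rw [Finset.card_erase_of_mem (Finset.mem_sdiff.mpr hw)]
        rw [hBA] at hd
        simp at hd
        omega
      have hsub : A.erase w ∪ B ⊆ A ∪ B := by
        apply Finset.union_subset_union_left
        exact Finset.erase_subset _ _
      obtain ⟨D, h0, h1, h2, h3⟩ := IH (A.erase w) B hrec
        (hclq.subset (by exact_mod_cast hsub))
        (by
          have : B ⊆ A.erase w := fun z hz =>
            Finset.mem_erase_of_ne_of_mem (fun he => hw.2 (he ▸ hz)) (hBsubA hz)
          exact le_trans hB (Finset.card_le_card this))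
        hB
      refine ⟨fun i => if i = 0 then A else D (i - 1), rfl, ?_, ?_, ?_⟩
      · show (if d + 1 = 0 then A else D (d + 1 - 1)) = B
        rw [if_neg (by omega)]
        simpa using h1
      · intro i hi
        show G.IsClique ((if i = 0 then A else D (i - 1) : Finset V) : Set V) ∧
          k ≤ (if i = 0 then A else D (i - 1)).card ∧ (if i = 0 then A else D (i - 1)) ⊆ A ∪ B
        by_cases h : i = 0
        · rw [if_pos h]
          exact ⟨hclq.subset (by exact_mod_cast Finset.subset_union_left), hA,
            Finset.subset_union_left⟩
        · rw [if_neg h]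
          obtain ⟨ha, hb, hc⟩ := h2 (i - 1) (by omega)
          exact ⟨ha, hb, le_trans hc hsub⟩
      · intro i hi
        show TARStep (if i = 0 then A else D (i - 1)) (if i + 1 = 0 then A else D (i + 1 - 1))
        rw [if_neg (show ¬(i + 1 = 0) by omega), (by omega : i + 1 - 1 = i)]
        by_cases h : i = 0
        · rw [if_pos h, h, h0]
          right
          exact ⟨w, hw.1, rfl⟩
        · rw [if_neg h]
          have := h3 (i - 1) (by omega)
          rwa [(by omega : i - 1 + 1 = i)] at this
    · -- insert a vertex of B \ A
      rw [Finset.mem_sdiff] at hw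
      have hrec : ((insert w A) \ B).card + (B \ insert w A).card = d := by
        have e1 : insert w A \ B = A \ B := by
          ext z
          simp only [Finset.mem_sdiff, Finset.mem_insert]
          constructor
          · rintro ⟨hz | hz, h⟩
            · exact absurd hw.1 (hz ▸ h)
            · exact ⟨hz, h⟩
          · tauto
        have e2 : B \ insert w A = (B \ A).erase w := by
          ext z
          simp only [Finset.mem_sdiff, Finset.mem_insert, Finset.mem_erase]
          tauto
        rw [e1, e2, Finset.card_erase_of_mem (Finset.mem_sdiff.mpr hw)]
        have : 0 < (B \ A).card := Finset.card_pos.mpr ⟨w, Finset.mem_sdiff.mpr hw⟩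
        omega
      have hwAB : w ∈ A ∪ B := Finset.mem_union_right _ hw.1
      have hsub : insert w A ∪ B ⊆ A ∪ B := by
        intro z hz
        rcases Finset.mem_union.mp hz with hz | hz
        · rcases Finset.mem_insert.mp hz with hz | hz
          · exact hz ▸ hwAB
          · exact Finset.mem_union_left _ hz
        · exact Finset.mem_union_right _ hz
      obtain ⟨D, h0, h1, h2, h3⟩ := IH (insert w A) B hrec
        (hclq.subset (by exact_mod_cast hsub))
        (le_trans hA (Finset.card_le_card (Finset.subset_insert _ _)))
        hB
      refine ⟨fun i => if i = 0 then A else D (i - 1), rfl, ?_, ?_, ?_⟩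
      · show (if d + 1 = 0 then A else D (d + 1 - 1)) = B
        rw [if_neg (by omega)]
        simpa using h1
      · intro i hi
        show G.IsClique ((if i = 0 then A else D (i - 1) : Finset V) : Set V) ∧
          k ≤ (if i = 0 then A else D (i - 1)).card ∧ (if i = 0 then A else D (i - 1)) ⊆ A ∪ B
        by_cases h : i = 0
        · rw [if_pos h]
          exact ⟨hclq.subset (by exact_mod_cast Finset.subset_union_left), hA,
            Finset.subset_union_left⟩
        · rw [if_neg h]
          obtain ⟨ha, hb, hc⟩ := h2 (i - 1) (by omega)
          exact ⟨ha, hb, le_trans hc hsub⟩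
      · intro i hi
        show TARStep (if i = 0 then A else D (i - 1)) (if i + 1 = 0 then A else D (i + 1 - 1))
        rw [if_neg (show ¬(i + 1 = 0) by omega), (by omega : i + 1 - 1 = i)]
        by_cases h : i = 0
        · rw [if_pos h, h, h0]
          left
          exact ⟨w, hw.2, rfl⟩
        · rw [if_neg h]
          have := h3 (i - 1) (by omega)
          rwa [(by omega : i - 1 + 1 = i)] at this

lemma sdiff_le_steps {C : ℕ → Finset V} {t u : ℕ}
    (hsteps : ∀ j, t ≤ j → j < u → TARStep (C j) (C (j + 1))) :
    ∀ d, d ≤ u - t → (C (u - d) \ C u).card + (C u \ C (u - d)).card ≤ d := by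
  intro d
  induction d with
  | zero => simp
  | succ d IH =>
    intro hd
    have hstep : TARStep (C (u - (d + 1))) (C (u - d)) := by
      have := hsteps (u - (d + 1)) (by omega) (by omega)
      rwa [(by omega : u - (d + 1) + 1 = u - d)] at this
    calc (C (u - (d + 1)) \ C u).card + (C u \ C (u - (d + 1))).card
        ≤ (C (u - d) \ C u).card + (C u \ C (u - d)).card + 1 := hstep.sdiff_bound
      _ ≤ d + 1 := by
          have := IH (by omega)
          omega

lemma reroute {G : SimpleGraph V} (hch : IsChordal G) (k : ℕ) (v : V) :
    ∀ m (C : ℕ → Finset V),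
    (∀ i ≤ m, G.IsClique ((C i : Finset V) : Set V) ∧ k ≤ (C i).card ∧ v ∉ C i) →
    (∀ i < m, TARStep (C i) (C (i + 1))) →
    (∀ z ∈ C 0, G.Adj v z) → (∀ z ∈ C m, G.Adj v z) →
    ∃ m' ≤ m, ∃ D : ℕ → Finset V, D 0 = C 0 ∧ D m' = C m ∧
      (∀ i ≤ m', G.IsClique ((D i : Finset V) : Set V) ∧ k ≤ (D i).card ∧
        ∀ z ∈ D i, G.Adj v z) ∧
      (∀ i < m', TARStep (D i) (D (i + 1))) := by
  intro m
  induction m using Nat.strong_induction_on with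
  | _ m IHm =>
  intro C hprops hsteps h0 hm
  by_cases hall : ∀ i ≤ m, ∀ z ∈ C i, G.Adj v z
  · exact ⟨m, le_rfl, C, rfl, rfl,
      fun i hi => ⟨(hprops i hi).1, (hprops i hi).2.1, hall i hi⟩, hsteps⟩
  · push_neg at hall
    classical
    have hexP : ∃ j, j ≤ m ∧ ∃ z ∈ C j, ¬ G.Adj v z := by
      obtain ⟨j, hj, z, hz, hnz⟩ := hall
      exact ⟨j, hj, z, hz, hnz⟩
    let Pb : ℕ → Prop := fun j => j ≤ m ∧ ∃ z ∈ C j, ¬ G.Adj v z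
    haveI hPdec : DecidablePred Pb := Classical.decPred _
    have hexP' : ∃ j, Pb j := hexP
    set j0 := Nat.find hexP' with hj0def
    have hj0 : Pb j0 := Nat.find_spec hexP'
    have hj0min : ∀ l < j0, ¬ Pb l := fun l hl => Nat.find_min hexP' hl
    -- j0 is minimal bad index
    have hj0pos : 0 < j0 := by
      rcases Nat.eq_zero_or_pos j0 with h | h
      · exfalso
        obtain ⟨z, hz, hnz⟩ := hj0.2
        rw [h] at hz
        exact hnz (h0 z hz)
      · exact h
    set t := j0 - 1 with ht
    -- u : minimal good index above j0
    have hexQ : ∃ l, j0 < l ∧ l ≤ m ∧ ∀ z ∈ C l, G.Adj v z := by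
      refine ⟨m, ?_, le_rfl, hm⟩
      rcases Nat.lt_or_ge j0 m with h | h
      · exact h
      · exfalso
        have : j0 = m := by omega
        obtain ⟨z, hz, hnz⟩ := hj0.2
        rw [this] at hz
        exact hnz (hm z hz)
    haveI hQdec : DecidablePred (fun l => j0 < l ∧ l ≤ m ∧ ∀ z ∈ C l, G.Adj v z) := Classical.decPred _
    set u := Nat.find hexQ with hudef
    have hu : j0 < u ∧ u ≤ m ∧ ∀ z ∈ C u, G.Adj v z := Nat.find_spec hexQ
    have humin : ∀ l < u, ¬ (j0 < l ∧ l ≤ m ∧ ∀ z ∈ C l, G.Adj v z) := fun l hl => Nat.find_min hexQ hl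
    have htu : t + 1 < u := by omega
    have hum : u ≤ m := hu.2.1
    -- C t is good
    have hCt : ∀ z ∈ C t, G.Adj v z := by
      by_contra h
      push_neg at h
      obtain ⟨z, hz, hnz⟩ := h
      have : Pb t := ⟨by omega, z, hz, hnz⟩
      have := hj0min t (by omega) this
      exact this
    have hCu : ∀ z ∈ C u, G.Adj v z := hu.2.2
    -- interior indices are bad
    have hout : ∀ j, t < j → j < u → ∃ w ∈ C j, ¬ G.Adj v w := by
      intro j hj1 hj2
      rcases Nat.lt_or_ge j j0 with h | h
      · have : j = t := by omega
        exfalso; omega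
      · rcases Nat.eq_or_lt_of_le h with h' | h'
        · exact h'.symm ▸ hj0.2
        · by_contra hcon
          push_neg at hcon
          exact humin j (by omega) ⟨by omega, by omega, hcon⟩
    -- union clique via dive lemma
    have hdive : ∀ x y : V, x ∈ C t → y ∈ C u → x = y ∨ G.Adj x y := fun x y hx hy =>
      dive_clique hch v C t u htu
      (fun j hj1 hj2 => hsteps j (by omega))
      (fun j hj1 hj2 => (hprops j (by omega)).1)
      (fun j hj1 hj2 => (hprops j (by omega)).2.2)
      hCt hCu hout hx hy
    have hunion : G.IsClique ((C t ∪ C u : Finset V) : Set V) := by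
      intro z1 hz1 z2 hz2 hne
      simp only [Finset.coe_union, Set.mem_union, Finset.mem_coe] at hz1 hz2
      rcases hz1 with hz1 | hz1 <;> rcases hz2 with hz2 | hz2
      · exact (hprops t (by omega)).1 hz1 hz2 hne
      · rcases hdive _ _ hz1 hz2 with h | h
        · exact absurd h hne
        · exact h
      · rcases hdive _ _ hz2 hz1 with h | h
        · exact absurd h.symm hne
        · exact h.symm
      · exact (hprops u (by omega)).1 hz1 hz2 hne
    -- the shortcut length
    set d := (C t \ C u).card + (C u \ C t).card with hd
    have hdlt : d + 2 ≤ u - t := by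
      -- step t is an insertion of a non-neighbor
      obtain ⟨w, hwu, hwnadj⟩ := hout (t + 1) (by omega) (by omega)
      have hstep := hsteps t (by omega : t < m)
      rcases hstep with ⟨z, hz, hzC⟩ | ⟨z, hz, hzC⟩
      · -- insert z; w must be z
        have hwz : w = z := by
          by_contra h
          rw [hzC] at hwu
          rcases Finset.mem_insert.mp hwu with h' | h'
          · exact h h'
          · exact hwnadj (hCt w h')
        subst hwz
        have hwnotCt : w ∉ C t := hz
        have hwnotCu : w ∉ C u := fun h => hwnadj (hCu w h)
        -- (C (t+1) \ C u).card = d + 1 etc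
        have e1 : C (t + 1) \ C u = insert w (C t \ C u) := by
          rw [hzC]
          ext z'
          simp only [Finset.mem_sdiff, Finset.mem_insert]
          constructor
          · rintro ⟨h1 | h1, h2⟩
            · exact Or.inl h1
            · exact Or.inr ⟨h1, h2⟩
          · rintro (h1 | ⟨h1, h2⟩)
            · exact ⟨Or.inl h1, h1 ▸ hwnotCu⟩
            · exact ⟨Or.inr h1, h2⟩
        have e2 : C u \ C (t + 1) = C u \ C t := by
          rw [hzC]
          ext z'
          simp only [Finset.mem_sdiff, Finset.mem_insert]
          constructor
          · rintro ⟨h1, h2⟩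
            push_neg at h2
            exact ⟨h1, h2.2⟩
          · rintro ⟨h1, h2⟩
            refine ⟨h1, ?_⟩
            push_neg
            exact ⟨fun he => hwnotCu (he ▸ h1), h2⟩
        have hb := sdiff_le_steps (C := C) (t := t) (u := u)
          (fun j hj1 hj2 => hsteps j (by omega)) (u - (t + 1)) (by omega)
        rw [(by omega : u - (u - (t + 1)) = t + 1)] at hb
        rw [e1, e2] at hb
        rw [Finset.card_insert_of_notMem (fun h => hwnotCt (Finset.mem_sdiff.mp h).1)] at hb
        omega
      · -- erase: impossible, C (t+1) ⊆ C t all good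
        exfalso
        rw [hzC] at hwu
        exact hwnadj (hCt w (Finset.mem_of_mem_erase hwu))
    -- build replacement path
    obtain ⟨R, hR0, hRd, hRprops, hRsteps⟩ := mono_path k d (C t) (C u) rfl hunion
      (hprops t (by omega)).2.1 (hprops u (by omega)).2.1
    -- new shorter sequence via splicing
    have hvCtCu : v ∉ C t ∪ C u := by
      intro h
      rcases Finset.mem_union.mp h with h | h
      · exact (hprops t (by omega)).2.2 h
      · exact (hprops u (by omega)).2.2 h
    have hP1 : PSeq G k (fun s => v ∉ s) t C :=
      ⟨fun i hi => ⟨(hprops i (by omega)).1, (hprops i (by omega)).2.1,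
        (hprops i (by omega)).2.2⟩, fun i hi => hsteps i (by omega)⟩
    have hP2 : PSeq G k (fun s => v ∉ s) d R :=
      ⟨fun i hi => ⟨(hRprops i hi).1, (hRprops i hi).2.1,
        fun h => hvCtCu ((hRprops i hi).2.2 h)⟩, hRsteps⟩
    have hP3 : PSeq G k (fun s => v ∉ s) (m - u) (fun j => C (u + j)) :=
      ⟨fun i hi => ⟨(hprops (u + i) (by omega)).1, (hprops (u + i) (by omega)).2.1,
        (hprops (u + i) (by omega)).2.2⟩,
       fun i hi => by
        have := hsteps (u + i) (by omega)
        rwa [(by omega : u + i + 1 = u + (i + 1))] at this⟩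
    have hsp1 := hP1.splice hP2 (by rw [hR0])
    set sp1 : ℕ → Finset V := fun i => if i ≤ t then C i else R (i - t) with hsp1def
    have hsp1end : sp1 (t + d) = C u := by
      show (if t + d ≤ t then C (t + d) else R (t + d - t)) = C u
      by_cases h : d = 0
      · have hCtCu : C t = C u := by rw [← hR0, ← hRd, h]
        rw [if_pos (by omega), (by omega : t + d = t)]
        exact hCtCu
      · rw [if_neg (by omega), (by omega : t + d - t = d), hRd]
    have hsp2 := hsp1.splice hP3 (by rw [hsp1end, Nat.add_zero])
    set m' := t + d + (m - u) with hm'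
    set C2 : ℕ → Finset V := fun i => if i ≤ t + d then sp1 i else C (u + (i - (t + d))) with hC2
    have hC2props : ∀ i ≤ m', G.IsClique ((C2 i : Finset V) : Set V) ∧ k ≤ (C2 i).card ∧ v ∉ C2 i := by
      intro i hi
      have := hsp2.1 i (by omega)
      exact this
    have hC2steps : ∀ i < m', TARStep (C2 i) (C2 (i + 1)) := fun i hi => hsp2.2 i (by omega)
    have hC20 : C2 0 = C 0 := by
      show (if 0 ≤ t + d then sp1 0 else _) = C 0
      rw [if_pos (by omega)]
      show (if 0 ≤ t then C 0 else R (0 - t)) = C 0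
      rw [if_pos (by omega)]
    have hC2m : C2 m' = C m := by
      show (if m' ≤ t + d then sp1 m' else C (u + (m' - (t + d)))) = C m
      by_cases h : m = u
      · rw [if_pos (by omega), (by omega : m' = t + d), hsp1end, h]
      · rw [if_neg (by omega), (by omega : u + (m' - (t + d)) = m)]
    -- recurse
    obtain ⟨m'', hm''le, D, hD0, hDm, hDprops, hDsteps⟩ := IHm m' (by omega) C2
      (fun i hi => hC2props i hi) hC2steps
      (by rw [hC20]; exact h0) (by rw [hC2m]; exact hm)
    exact ⟨m'', by omega, D, by rw [hD0, hC20], by rw [hDm, hC2m],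
      hDprops, hDsteps⟩
theorem stmt15 (G : SimpleGraph V) (hchordal : IsChordal G)
    (k ℓ : ℕ) (f : ℕ → Finset V)
    (hf : TARSeq G k ℓ f)
    (hshort : ∀ (ℓ' : ℕ) (g : ℕ → Finset V),
      TARSeq G k ℓ' g → g 0 = f 0 → g ℓ' = f ℓ → ℓ ≤ ℓ')
    (v : V) (p q : ℕ) (hpq : p < q) (hq : q ≤ ℓ)
    (hvp : v ∈ f p) (hvq : v ∈ f q) :
    ∀ i, p ≤ i → i ≤ q → v ∈ f i := by
  classical
  by_contra hcon
  push_neg at hcon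
  obtain ⟨i0, hpi0, hi0q, hvi0⟩ := hcon
  -- a : last index before i0 with v ∈ f a
  set a := Nat.findGreatest (fun j => v ∈ f j) i0 with hadef
  have ha1 : v ∈ f a := Nat.findGreatest_spec (P := fun j => v ∈ f j) hpi0 hvp
  have ha2 : a ≤ i0 := Nat.findGreatest_le i0
  have ha3 : p ≤ a := Nat.le_findGreatest (P := fun j => v ∈ f j) hpi0 hvp
  have ha4 : a < i0 := by
    rcases Nat.eq_or_lt_of_le ha2 with h | h
    · exact absurd (h ▸ ha1) hvi0
    · exact h
  have ha5 : ∀ j, a < j → j ≤ i0 → v ∉ f j := fun j hj1 hj2 =>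
    Nat.findGreatest_is_greatest (P := fun j => v ∈ f j) hj1 hj2
  -- b : first index after i0 with v ∈ f b
  have hi0q' : i0 < q := by
    rcases Nat.eq_or_lt_of_le hi0q with h | h
    · exact absurd (h ▸ hvq) hvi0
    · exact h
  classical
  have hexb : ∃ j, v ∈ f (i0 + 1 + j) := ⟨q - i0 - 1, by rwa [(by omega : i0 + 1 + (q - i0 - 1) = q)]⟩
  set b0 := Nat.find hexb with hb0def
  set b := i0 + 1 + b0 with hbdef
  have hb1 : v ∈ f b := Nat.find_spec hexb
  have hb2 : b ≤ q := by
    have : b0 ≤ q - i0 - 1 := Nat.find_min' hexb (by rwa [(by omega : i0 + 1 + (q - i0 - 1) = q)])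
    omega
  have hb3 : ∀ j, i0 < j → j < b → v ∉ f j := by
    intro j hj1 hj2 hmem
    have : ¬ v ∈ f (i0 + 1 + (j - i0 - 1)) := Nat.find_min hexb (by omega)
    rw [(by omega : i0 + 1 + (j - i0 - 1) = j)] at this
    exact this hmem
  have hmid : ∀ j, a < j → j < b → v ∉ f j := by
    intro j hj1 hj2
    rcases le_or_gt j i0 with h | h
    · exact ha5 j hj1 h
    · exact hb3 j h hj2
  have hab : a + 2 ≤ b := by omega
  have hbl : b ≤ ℓ := le_trans hb2 hq
  -- step at a removes v
  have hfa1 : f (a + 1) = (f a).erase v := by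
    rcases hf.2 a (by omega) with ⟨w, hw, hwC⟩ | ⟨w, hw, hwC⟩
    · exfalso
      exact hmid (a + 1) (by omega) (by omega) (hwC ▸ Finset.mem_insert_of_mem ha1)
    · by_cases hwv : w = v
      · rw [hwC, hwv]
      · exfalso
        exact hmid (a + 1) (by omega) (by omega)
          (hwC ▸ Finset.mem_erase_of_ne_of_mem (Ne.symm hwv) ha1)
  -- step at b - 1 adds v
  have hfb : f b = insert v (f (b - 1)) := by
    have hstep : TARStep (f (b - 1)) (f b) := by
      have := hf.2 (b - 1) (by omega)
      rwa [(by omega : b - 1 + 1 = b)] at this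
    rcases hstep with ⟨w, hw, hwC⟩ | ⟨w, hw, hwC⟩
    · by_cases hwv : w = v
      · rw [hwC, hwv]
      · exfalso
        rw [hwC] at hb1
        rcases Finset.mem_insert.mp hb1 with h | h
        · exact hwv h.symm
        · exact hmid (b - 1) (by omega) (by omega) h
    · exfalso
      rw [hwC] at hb1
      exact hmid (b - 1) (by omega) (by omega) (Finset.mem_of_mem_erase hb1)
  have hvb1 : v ∉ f (b - 1) := hmid (b - 1) (by omega) (by omega)
  -- interior sequence
  set msub := b - a - 2 with hmsub
  set Cin : ℕ → Finset V := fun j => f (a + 1 + j) with hCin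
  have hCinprops : ∀ i ≤ msub, G.IsClique ((Cin i : Finset V) : Set V) ∧ k ≤ (Cin i).card ∧ v ∉ Cin i := by
    intro i hi
    refine ⟨(hf.1 (a + 1 + i) (by omega)).1, (hf.1 (a + 1 + i) (by omega)).2, ?_⟩
    exact hmid (a + 1 + i) (by omega) (by omega)
  have hCinsteps : ∀ i < msub, TARStep (Cin i) (Cin (i + 1)) := by
    intro i hi
    show TARStep (f (a + 1 + i)) (f (a + 1 + (i + 1)))
    have := hf.2 (a + 1 + i) (by omega)
    rwa [(by omega : a + 1 + i + 1 = a + 1 + (i + 1))] at this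
  have hCin0 : ∀ z ∈ Cin 0, G.Adj v z := by
    intro z hz
    show G.Adj v z
    have hz' : z ∈ (f a).erase v := by
      rw [← hfa1]
      simpa using hz
    rw [Finset.mem_erase] at hz'
    exact (hf.1 a (by omega)).1 (by exact_mod_cast ha1) (by exact_mod_cast hz'.2) (Ne.symm hz'.1)
  have hCinend : ∀ z ∈ Cin msub, G.Adj v z := by
    intro z hz
    have hzb1 : z ∈ f (b - 1) := by
      have : Cin msub = f (b - 1) := by
        show f (a + 1 + msub) = f (b - 1)
        congr 1
        omega
      rwa [this] at hz
    have hzb : z ∈ f b := by rw [hfb]; exact Finset.mem_insert_of_mem hzb1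
    have hzv : z ≠ v := fun h => hvb1 (h ▸ hzb1)
    exact (hf.1 b (by omega)).1 (by exact_mod_cast hb1) (by exact_mod_cast hzb) (Ne.symm hzv)
  obtain ⟨m', hm'le, D, hD0, hDm, hDprops, hDsteps⟩ :=
    reroute hchordal k v msub Cin hCinprops hCinsteps hCin0 hCinend
  -- assemble the shorter sequence
  have hvD : ∀ i ≤ m', v ∉ D i := by
    intro i hi h
    exact G.irrefl ((hDprops i hi).2.2 v h)
  set Dv : ℕ → Finset V := fun j => insert v (D j) with hDv
  have hPf : PSeq G k (fun _ => True) a f :=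
    ⟨fun i hi => ⟨(hf.1 i (by omega)).1, (hf.1 i (by omega)).2, trivial⟩,
     fun i hi => hf.2 i (by omega)⟩
  have hPDv : PSeq G k (fun _ => True) m' Dv := by
    constructor
    · intro i hi
      refine ⟨?_, ?_, trivial⟩
      · show G.IsClique ((insert v (D i) : Finset V) : Set V)
        rw [Finset.coe_insert]
        apply ((hDprops i hi).1).insert
        intro z hz hne
        exact (hDprops i hi).2.2 z (by exact_mod_cast hz)
      · show k ≤ (insert v (D i)).card
        exact le_trans (hDprops i hi).2.1 (Finset.card_le_card (Finset.subset_insert _ _))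
    · intro i hi
      show TARStep (insert v (D i)) (insert v (D (i + 1)))
      exact (hDsteps i hi).insert_v (hvD i (by omega)) (hvD (i + 1) (by omega))
  have hlink1 : f a = Dv 0 := by
    show f a = insert v (D 0)
    rw [hD0]
    show f a = insert v (Cin 0)
    show f a = insert v (f (a + 1 + 0))
    rw [(by omega : a + 1 + 0 = a + 1), hfa1, Finset.insert_erase ha1]
  have hsp1 := hPf.splice hPDv hlink1
  set sp1 : ℕ → Finset V := fun i => if i ≤ a then f i else Dv (i - a) with hsp1def
  have hDmb : D m' = f (b - 1) := by
    rw [hDm]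
    show f (a + 1 + msub) = f (b - 1)
    congr 1
    omega
  have hsp1end : sp1 (a + m') = f b := by
    show (if a + m' ≤ a then f (a + m') else Dv (a + m' - a)) = f b
    by_cases h : m' = 0
    · rw [if_pos (by omega), (by omega : a + m' = a), hlink1]
      show insert v (D 0) = f b
      rw [(show D 0 = D m' by rw [h]), hDmb, ← hfb]
    · rw [if_neg (by omega), (by omega : a + m' - a = m')]
      show insert v (D m') = f b
      rw [hDmb, ← hfb]
  have hPtail : PSeq G k (fun _ => True) (ℓ - b) (fun j => f (b + j)) := by
    constructor
    · intro i hi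
      exact ⟨(hf.1 (b + i) (by omega)).1, (hf.1 (b + i) (by omega)).2, trivial⟩
    · intro i hi
      show TARStep (f (b + i)) (f (b + (i + 1)))
      have := hf.2 (b + i) (by omega)
      rwa [(by omega : b + i + 1 = b + (i + 1))] at this
  have hsp2 := hsp1.splice hPtail (by rw [hsp1end, Nat.add_zero])
  set ℓ' := a + m' + (ℓ - b) with hℓ'
  set g : ℕ → Finset V := fun i => if i ≤ a + m' then sp1 i else f (b + (i - (a + m'))) with hg
  have hgseq : TARSeq G k ℓ' g := by
    refine ⟨fun i hi => ⟨(hsp2.1 i (by omega)).1, (hsp2.1 i (by omega)).2.1⟩,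
      fun i hi => hsp2.2 i (by omega)⟩
  have hg0 : g 0 = f 0 := by
    show (if 0 ≤ a + m' then sp1 0 else _) = f 0
    rw [if_pos (by omega)]
    show (if 0 ≤ a then f 0 else Dv (0 - a)) = f 0
    by_cases h : a = 0
    · rw [if_pos (by omega)]
    · rw [if_pos (by omega)]
  have hgend : g ℓ' = f ℓ := by
    show (if ℓ' ≤ a + m' then sp1 ℓ' else f (b + (ℓ' - (a + m')))) = f ℓ
    by_cases h : ℓ = b
    · rw [if_pos (by omega), (by omega : ℓ' = a + m'), hsp1end, h]
    · rw [if_neg (by omega)]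
      congr 1
      omega
  have := hshort ℓ' g hgseq hg0 hgend
  omega
end

section
/- Let G be an interval graph with clique path M_0, M_1, ..., M_t (t ≥ 1), and let C_s ⊆ M_0, C_t ⊆ M_t be cliques with C_s ⊄ M_1, C_s ⊄ C_t, and |C_s| ≥ k+1. Let u be a vertex of C_s \ C_t with the minimum r-value, where r_v = max{i : v ∈ M_i}. Then the minimum length of a TAR(k)-sequence from C_s to C_t equals one plus the minimum length of a TAR(k)-sequence from C_s \ {u} to C_t. -/
variable {V : Type*} [DecidableEq V]

/-- symmetric difference distance -/
def sdist (A B : Finset V) : ℕ := (A \ B).card + (B \ A).card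

lemma sdist_triangle (A B C : Finset V) : sdist A C ≤ sdist A B + sdist B C := by
  have h1 : A \ C ⊆ (A \ B) ∪ (B \ C) := by
    intro x hx; simp only [Finset.mem_sdiff, Finset.mem_union] at hx ⊢; tauto
  have h2 : C \ A ⊆ (B \ A) ∪ (C \ B) := by
    intro x hx; simp only [Finset.mem_sdiff, Finset.mem_union] at hx ⊢; tauto
  have c1 := (Finset.card_le_card h1).trans (Finset.card_union_le _ _)
  have c2 := (Finset.card_le_card h2).trans (Finset.card_union_le _ _)
  unfold sdist; omega

lemma tarStep_sdist {A B : Finset V} (h : TARStep A B) : sdist A B ≤ 1 := by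
  rcases h with ⟨v, hv, rfl⟩ | ⟨v, hv, rfl⟩
  · have h1 : A \ insert v A = ∅ := by
      apply Finset.sdiff_eq_empty_iff_subset.2 (Finset.subset_insert _ _)
    have h2 : insert v A \ A ⊆ {v} := by
      intro x hx; simp only [Finset.mem_sdiff, Finset.mem_insert, Finset.mem_singleton] at hx ⊢
      tauto
    have := Finset.card_le_card h2
    unfold sdist; rw [h1]; simp only [Finset.card_empty, Finset.card_singleton] at *; omega
  · have h1 : A.erase v \ A = ∅ := by
      apply Finset.sdiff_eq_empty_iff_subset.2 (Finset.erase_subset _ _)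
    have h2 : A \ A.erase v ⊆ {v} := by
      intro x hx; simp only [Finset.mem_sdiff, Finset.mem_erase, Finset.mem_singleton] at hx ⊢
      tauto
    have := Finset.card_le_card h2
    unfold sdist; rw [h1]; simp only [Finset.card_empty, Finset.card_singleton] at *; omega

lemma sdist_erase_le (u : V) (A B : Finset V) :
    sdist (A.erase u) (B.erase u) ≤ sdist A B := by
  have h1 : A.erase u \ B.erase u ⊆ A \ B := by
    intro x hx; simp only [Finset.mem_sdiff, Finset.mem_erase] at hx ⊢; tauto
  have h2 : B.erase u \ A.erase u ⊆ B \ A := by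
    intro x hx; simp only [Finset.mem_sdiff, Finset.mem_erase] at hx ⊢; tauto
  exact add_le_add (Finset.card_le_card h1) (Finset.card_le_card h2)

lemma walk_bound (g : ℕ → Finset V) :
    ∀ n, (∀ i < n, sdist (g i) (g (i+1)) ≤ 1) → sdist (g 0) (g n) ≤ n := by
  intro n
  induction n with
  | zero =>
    intro _
    have : g 0 \ g 0 = ∅ := Finset.sdiff_self _
    unfold sdist; rw [this]; simp
  | succ n ih =>
    intro h
    calc sdist (g 0) (g (n+1)) ≤ sdist (g 0) (g n) + sdist (g n) (g (n+1)) :=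
          sdist_triangle _ _ _
      _ ≤ n + 1 := add_le_add (ih fun i hi => h i (by omega)) (h n (by omega))

lemma tarSeq_cons {G : SimpleGraph V} {k : ℕ} {f : ℕ → Finset V} {ℓ : ℕ}
    (hf : TARSeq G k ℓ f) (C : Finset V) (hC : G.IsClique (C : Set V)) (hCk : k ≤ C.card)
    (hstep : TARStep C (f 0)) :
    TARSeq G k (ℓ+1) (fun i => if i = 0 then C else f (i-1)) := by
  constructor
  · intro i hi
    by_cases h : i = 0
    · simp [h, hC, hCk]
    · simp only [if_neg h]
      exact hf.1 (i-1) (by omega)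
  · intro i hi
    by_cases h : i = 0
    · subst h; simpa using hstep
    · simp only [if_neg h, if_neg (by omega : ¬ i + 1 = 0), Nat.add_sub_cancel]
      have := hf.2 (i-1) (by omega)
      rwa [show i - 1 + 1 = i by omega] at this

lemma tarSeq_concat {G : SimpleGraph V} {k : ℕ} {g f : ℕ → Finset V} {m n : ℕ}
    (hg : TARSeq G k m g) (hf : TARSeq G k n f) (hjoin : g m = f 0) :
    ∃ h : ℕ → Finset V, TARSeq G k (m+n) h ∧ h 0 = g 0 ∧ h (m+n) = f n := by
  refine ⟨fun i => if i ≤ m then g i else f (i - m), ⟨?_, ?_⟩, by simp, ?_⟩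
  · intro i hi
    by_cases h : i ≤ m
    · simp only [if_pos h]; exact hg.1 i h
    · simp only [if_neg h]; exact hf.1 (i - m) (by omega)
  · intro i hi
    rcases lt_trichotomy i m with h | h | h
    · simp only [if_pos h.le, if_pos (by omega : i + 1 ≤ m)]
      exact hg.2 i h
    · subst h
      simp only [if_pos le_rfl, if_neg (by omega : ¬ i + 1 ≤ i), Nat.add_sub_cancel_left,
        hjoin]
      exact hf.2 0 (by omega)
    · simp only [if_neg (by omega : ¬ i ≤ m), if_neg (by omega : ¬ i + 1 ≤ m)]
      have := hf.2 (i - m) (by omega)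
      rwa [show i - m + 1 = i + 1 - m by omega] at this
  · by_cases h : n = 0
    · subst h
      simp only [Nat.add_zero, if_pos le_rfl, hjoin]
    · simp only [if_neg (by omega : ¬ m + n ≤ m), Nat.add_sub_cancel_left]

lemma tarSeq_within {G : SimpleGraph V} {k : ℕ} (K : Finset V)
    (hK : G.IsClique (K : Set V)) (B : Finset V) (hB : B ⊆ K) (hBk : k ≤ B.card) :
    ∀ (n : ℕ) (A : Finset V), A ⊆ K → k ≤ A.card → sdist A B = n →
    ∃ f : ℕ → Finset V, TARSeq G k n f ∧ f 0 = A ∧ f n = B := by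
  intro n
  induction n with
  | zero =>
    intro A hA hAk h0
    have hAB : A = B := by
      have h1 : A \ B = ∅ := Finset.card_eq_zero.1 (by unfold sdist at h0; omega)
      have h2 : B \ A = ∅ := Finset.card_eq_zero.1 (by unfold sdist at h0; omega)
      exact Finset.Subset.antisymm (Finset.sdiff_eq_empty_iff_subset.1 h1)
        (Finset.sdiff_eq_empty_iff_subset.1 h2)
    exact ⟨fun _ => B,
      ⟨fun i _ => ⟨hK.subset (Finset.coe_subset.2 hB), hBk⟩,
       fun i hi => absurd hi (Nat.not_lt_zero i)⟩, hAB ▸ rfl, rfl⟩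
  | succ n ih =>
    intro A hA hAk h
    have hAclique : G.IsClique (A : Set V) := hK.subset (Finset.coe_subset.2 hA)
    by_cases hBA : (B \ A).Nonempty
    · obtain ⟨v, hv⟩ := hBA
      rw [Finset.mem_sdiff] at hv
      have e1 : insert v A \ B = A \ B := by
        ext x; simp only [Finset.mem_sdiff, Finset.mem_insert]
        constructor
        · rintro ⟨hx1 | hx1, hx2⟩
          · exact absurd (hx1 ▸ hv.1) hx2
          · exact ⟨hx1, hx2⟩
        · tauto
      have e2 : B \ insert v A = (B \ A).erase v := by
        ext x; simp only [Finset.mem_sdiff, Finset.mem_insert, Finset.mem_erase]; tauto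
      have hssub : sdist (insert v A) B = n := by
        have hc : (B \ insert v A).card = (B \ A).card - 1 := by
          rw [e2, Finset.card_erase_of_mem (Finset.mem_sdiff.2 hv)]
        have hpos : 1 ≤ (B \ A).card := Finset.card_pos.2 ⟨v, Finset.mem_sdiff.2 hv⟩
        unfold sdist at h ⊢; rw [e1, hc]; omega
      obtain ⟨f', hf', h0', hn'⟩ := ih (insert v A)
        (Finset.insert_subset (hB hv.1) hA)
        (hAk.trans (Finset.card_le_card (Finset.subset_insert _ _))) hssub
      refine ⟨fun i => if i = 0 then A else f' (i-1),
        tarSeq_cons hf' A hAclique hAk ?_, by simp, ?_⟩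
      · exact Or.inl ⟨v, hv.2, by rw [h0']⟩
      · simp only [if_neg (by omega : ¬ n + 1 = 0), Nat.add_sub_cancel]
        exact hn'
    · have hBsub : B ⊆ A := by
        rw [Finset.not_nonempty_iff_eq_empty] at hBA
        exact Finset.sdiff_eq_empty_iff_subset.1 hBA
      have hABne : (A \ B).Nonempty := by
        rw [Finset.not_nonempty_iff_eq_empty] at hBA
        apply Finset.card_pos.1
        unfold sdist at h; rw [hBA] at h; simp at h; omega
      obtain ⟨v, hv⟩ := hABne
      rw [Finset.mem_sdiff] at hv
      have hBsub' : B ⊆ A.erase v := fun x hx =>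
        Finset.mem_erase.2 ⟨fun hxv => hv.2 (hxv ▸ hx), hBsub hx⟩
      have e1 : A.erase v \ B = (A \ B).erase v := by
        ext x; simp only [Finset.mem_sdiff, Finset.mem_erase]; tauto
      have e2 : B \ A.erase v = ∅ := Finset.sdiff_eq_empty_iff_subset.2 hBsub'
      have hssub : sdist (A.erase v) B = n := by
        have hc : (A.erase v \ B).card = (A \ B).card - 1 := by
          rw [e1, Finset.card_erase_of_mem (Finset.mem_sdiff.2 hv)]
        have hpos : 1 ≤ (A \ B).card := Finset.card_pos.2 ⟨v, Finset.mem_sdiff.2 hv⟩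
        have hz : (B \ A).card = 0 := by
          rw [Finset.not_nonempty_iff_eq_empty] at hBA; rw [hBA]; simp
        unfold sdist at h ⊢; rw [e2, hc]; simp only [Finset.card_empty]; omega
      obtain ⟨f', hf', h0', hn'⟩ := ih (A.erase v)
        ((Finset.erase_subset _ _).trans hA)
        (hBk.trans (Finset.card_le_card hBsub')) hssub
      refine ⟨fun i => if i = 0 then A else f' (i-1),
        tarSeq_cons hf' A hAclique hAk ?_, by simp, ?_⟩
      · exact Or.inr ⟨v, hv.1, by rw [h0']⟩
      · simp only [if_neg (by omega : ¬ n + 1 = 0), Nat.add_sub_cancel]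
        exact hn'

lemma exists_maximal_aux {G : SimpleGraph V} (U : Finset V) (hU : ∀ D : Finset V, D ⊆ U) :
    ∀ (n : ℕ) (C : Finset V), U.card - C.card ≤ n → G.IsClique (C : Set V) →
    ∃ D, IsMaximalClique G D ∧ C ⊆ D := by
  intro n
  induction n with
  | zero =>
    intro C hn hC
    have hCU : C = U := Finset.eq_of_subset_of_card_le (hU C)
      (by have := Finset.card_le_card (hU C); omega)
    refine ⟨C, ⟨hC, fun D hD hCD => ?_⟩, Finset.Subset.rfl⟩
    exact Finset.Subset.antisymm hCD (hCU ▸ hU D)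
  | succ n ih =>
    intro C hn hC
    by_cases hm : ∀ D : Finset V, G.IsClique (D : Set V) → C ⊆ D → C = D
    · exact ⟨C, ⟨hC, hm⟩, Finset.Subset.rfl⟩
    · push_neg at hm
      obtain ⟨D, hD, hCD, hne⟩ := hm
      have hlt : C.card < D.card := Finset.card_lt_card (hCD.ssubset_of_ne hne)
      have hle : U.card - D.card ≤ n := by
        have := Finset.card_le_card (hU D); omega
      obtain ⟨E, hE, hDE⟩ := ih D hle hD
      exact ⟨E, hE, hCD.trans hDE⟩
theorem stmt16 (G : SimpleGraph V) (k t : ℕ) (ht : 1 ≤ t)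
    (M : ℕ → Finset V)
    -- `M 0, …, M t` is a clique path of the interval graph `G`:
    (hmax : ∀ i ≤ t, IsMaximalClique G (M i))
    (hall : ∀ D : Finset V, IsMaximalClique G D → ∃ i ≤ t, D = M i)
    (hinj : ∀ i ≤ t, ∀ j ≤ t, M i = M j → i = j)
    (hinterval : ∀ v : V, ∀ i j l, i ≤ j → j ≤ l → l ≤ t →
      v ∈ M i → v ∈ M l → v ∈ M j)
    (hvert : ∀ v : V, ∃ i ≤ t, v ∈ M i)
    -- `r v` is the r-value of `v`: the largest index `i ≤ t` with `v ∈ M i`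
    (r : V → ℕ)
    (hr : ∀ v : V, r v ≤ t ∧ v ∈ M (r v) ∧ ∀ i ≤ t, v ∈ M i → i ≤ r v)
    (Cstart Cend : Finset V)
    (hCs : Cstart ⊆ M 0) (hCe : Cend ⊆ M t)
    (hCsM1 : ¬ Cstart ⊆ M 1) (hCsCe : ¬ Cstart ⊆ Cend)
    (hcard : k + 1 ≤ Cstart.card)
    (u : V) (hu : u ∈ Cstart) (hu' : u ∉ Cend)
    (humin : ∀ w ∈ Cstart, w ∉ Cend → r u ≤ r w)
    (hex : ∃ (ℓ : ℕ) (f : ℕ → Finset V), TARSeq G k ℓ f ∧ f 0 = Cstart ∧ f ℓ = Cend) :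
    ∃ d : ℕ,
      IsLeast {ℓ | ∃ f : ℕ → Finset V,
        TARSeq G k ℓ f ∧ f 0 = Cstart.erase u ∧ f ℓ = Cend} d ∧
      IsLeast {ℓ | ∃ f : ℕ → Finset V,
        TARSeq G k ℓ f ∧ f 0 = Cstart ∧ f ℓ = Cend} (d + 1) := by
  classical
  -- every finset is contained in the union of the cliques
  set U : Finset V := (Finset.range (t+1)).biUnion M with hUdef
  have hUall : ∀ D : Finset V, D ⊆ U := by
    intro D v hv
    obtain ⟨i, hi, hvi⟩ := hvert v
    exact Finset.mem_biUnion.2 ⟨i, Finset.mem_range.2 (by omega), hvi⟩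
  -- every clique extends to some M i
  have hext : ∀ C : Finset V, G.IsClique (C : Set V) → ∃ i ≤ t, C ⊆ M i := by
    intro C hC
    obtain ⟨D, hD, hCD⟩ := exists_maximal_aux U hUall U.card C (by omega) hC
    obtain ⟨i, hi, rfl⟩ := hall D hD
    exact ⟨i, hi, hCD⟩
  -- r u = 0
  have hru : r u = 0 := by
    obtain ⟨x, hx, hx1⟩ := Finset.not_subset.1 hCsM1
    have hx0 : x ∈ M 0 := hCs hx
    have hrx : r x = 0 := by
      by_contra h
      exact hx1 (hinterval x 0 1 (r x) (by omega) (by omega) (hr x).1 hx0 (hr x).2.1)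
    have hxe : x ∉ Cend := fun hxe =>
      hx1 (hinterval x 0 1 t (by omega) ht le_rfl hx0 (hCe hxe))
    have := humin x hx hxe
    omega
  -- cliques containing u lie inside M 0
  have hM0 : ∀ C : Finset V, G.IsClique (C : Set V) → u ∈ C → C ⊆ M 0 := by
    intro C hC huC
    obtain ⟨i, hi, hCi⟩ := hext C hC
    have h1 : i ≤ r u := (hr u).2.2 i hi (hCi huC)
    have h2 : i = 0 := by omega
    exact h2 ▸ hCi
  have hM0clique : G.IsClique ((M 0 : Finset V) : Set V) := (hmax 0 (by omega)).1
  -- the key reduction: any sequence from Cstart yields a shorter one from Cstart.erase u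
  have hreduce : ∀ ℓ (f : ℕ → Finset V), TARSeq G k ℓ f → f 0 = Cstart → f ℓ = Cend →
      ∃ (ℓ' : ℕ) (f' : ℕ → Finset V), TARSeq G k ℓ' f' ∧ f' 0 = Cstart.erase u ∧
        f' ℓ' = Cend ∧ ℓ' + 1 ≤ ℓ := by
    intro ℓ f hf hf0 hfℓ
    have hexj : ∃ i, u ∉ f i := ⟨ℓ, by rw [hfℓ]; exact hu'⟩
    set j := Nat.find hexj with hjdef
    have hju : u ∉ f j := Nat.find_spec hexj
    have hminj : ∀ i < j, u ∈ f i := fun i hi => not_not.1 (Nat.find_min hexj hi)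
    have hj1 : 1 ≤ j := by
      rcases Nat.eq_zero_or_pos j with h | h
      · exact absurd (by rw [← h] at hf0; rw [hf0]; exact hu) hju
      · exact h
    have hjℓ : j ≤ ℓ := Nat.find_le (by rw [hfℓ]; exact hu')
    have huj1 : u ∈ f (j-1) := hminj (j-1) (by omega)
    have hstepj : TARStep (f (j-1)) (f j) := by
      have := hf.2 (j-1) (by omega)
      rwa [show j - 1 + 1 = j by omega] at this
    have hfjerase : f j = (f (j-1)).erase u := by
      rcases hstepj with ⟨v, hv, he⟩ | ⟨v, hv, he⟩
      · exact absurd (he ▸ Finset.mem_insert_of_mem huj1) hju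
      · rcases eq_or_ne v u with rfl | hne
        · exact he
        · exact absurd (he ▸ Finset.mem_erase.2 ⟨fun h => hne h.symm, huj1⟩) hju
    have hfj1M0 : f (j-1) ⊆ M 0 := hM0 _ (hf.1 (j-1) (by omega)).1 huj1
    have hBM0 : f j ⊆ M 0 := by
      rw [hfjerase]; exact (Finset.erase_subset _ _).trans hfj1M0
    have hAM0 : Cstart.erase u ⊆ M 0 := (Finset.erase_subset _ _).trans hCs
    have hAk : k ≤ (Cstart.erase u).card := by
      rw [Finset.card_erase_of_mem hu]; omega
    have hBk : k ≤ (f j).card := (hf.1 j (by omega)).2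
    -- bound the symmetric difference distance
    have hsd : sdist (Cstart.erase u) (f j) ≤ j - 1 := by
      have hstepbound : ∀ i < j - 1,
          sdist ((f i).erase u) ((f (i+1)).erase u) ≤ 1 :=
        fun i hi => (sdist_erase_le u _ _).trans (tarStep_sdist (hf.2 i (by omega)))
      have := walk_bound (fun i => (f i).erase u) (j-1) hstepbound
      rw [hf0, ← hfjerase] at this
      exact this
    -- the prefix sequence inside M 0
    obtain ⟨g, hg, hg0, hgm⟩ := tarSeq_within (M 0) hM0clique (f j) hBM0 hBk
      (sdist (Cstart.erase u) (f j)) (Cstart.erase u) hAM0 hAk rfl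
    -- the tail sequence
    have htail : TARSeq G k (ℓ - j) (fun i => f (j + i)) := by
      constructor
      · intro i hi; exact hf.1 (j + i) (by omega)
      · intro i hi; exact hf.2 (j + i) (by omega)
    obtain ⟨h, hh, hh0, hhend⟩ := tarSeq_concat hg htail (by rw [hgm, Nat.add_zero])
    refine ⟨sdist (Cstart.erase u) (f j) + (ℓ - j), h, hh, by rw [hh0, hg0], ?_, by omega⟩
    rw [hhend, show j + (ℓ - j) = ℓ by omega, hfℓ]
  -- assemble
  obtain ⟨ℓ₀, f₀, hf₀, h00, h0ℓ⟩ := hex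
  obtain ⟨ℓ₁, f₁, hseq₁, ha₁, hb₁, _⟩ := hreduce ℓ₀ f₀ hf₀ h00 h0ℓ
  have hne : {ℓ | ∃ f : ℕ → Finset V,
      TARSeq G k ℓ f ∧ f 0 = Cstart.erase u ∧ f ℓ = Cend}.Nonempty :=
    ⟨ℓ₁, f₁, hseq₁, ha₁, hb₁⟩
  obtain ⟨d, hdmem, hdlb⟩ : ∃ d, d ∈ {ℓ | ∃ f : ℕ → Finset V,
      TARSeq G k ℓ f ∧ f 0 = Cstart.erase u ∧ f ℓ = Cend} ∧
      ∀ x ∈ {ℓ | ∃ f : ℕ → Finset V,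
        TARSeq G k ℓ f ∧ f 0 = Cstart.erase u ∧ f ℓ = Cend}, d ≤ x :=
    ⟨_, Nat.sInf_mem hne, fun x hx => Nat.sInf_le hx⟩
  refine ⟨d, ⟨hdmem, hdlb⟩, ?_, ?_⟩
  · -- membership: a sequence of length d+1 from Cstart
    obtain ⟨g, hg, hg0, hgd⟩ := hdmem
    have hCsclique : G.IsClique (Cstart : Set V) :=
      hM0clique.subset (Finset.coe_subset.2 hCs)
    refine ⟨fun i => if i = 0 then Cstart else g (i-1),
      tarSeq_cons hg Cstart hCsclique (by omega) (Or.inr ⟨u, hu, hg0⟩), by simp, ?_⟩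
    simp only [if_neg (by omega : ¬ d + 1 = 0), Nat.add_sub_cancel]
    exact hgd
  · -- lower bound
    rintro x ⟨f, hf, hf0, hfx⟩
    obtain ⟨ℓ', f', hseq', ha', hb', hlt⟩ := hreduce x f hf hf0 hfx
    have : d ≤ ℓ' := hdlb ℓ' ⟨f', hseq', ha', hb'⟩
    omega
end

section
/- Let G be a simple graph and let C_s, C_t be cliques of G that are both contained in a common maximal clique M. Then for every k ≤ min(|C_s|, |C_t|), there exists a TAR(k)-sequence from C_s to C_t, and its minimum length is exactly |C_s △ C_t|. -/
variable {V : Type*} [DecidableEq V]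

lemma sd_step_le (A A' B : Finset V) (h : TARStep A A') :
    (A \ B ∪ B \ A).card ≤ (A' \ B ∪ B \ A').card + 1 := by
  obtain ⟨v, hv, rfl⟩ | ⟨v, hv, rfl⟩ := h <;>
  · refine le_trans (Finset.card_le_card (show _ ⊆ insert v (_ : Finset V) from fun x hx => ?_))
      (Finset.card_insert_le _ _)
    simp only [Finset.mem_union, Finset.mem_sdiff, Finset.mem_insert, Finset.mem_erase]
      at hx ⊢
    by_cases hxv : x = v <;> tauto

lemma construct (G : SimpleGraph V) (M B : Finset V) (hM : G.IsClique (M : Set V))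
    (hB : B ⊆ M) (k : ℕ) (hkB : k ≤ B.card) :
    ∀ n A, A ⊆ M → k ≤ A.card → (A \ B ∪ B \ A).card = n →
    ∃ f : ℕ → Finset V, TARSeq G k n f ∧ f 0 = A ∧ f n = B := by
  intro n
  induction n with
  | zero =>
    intro A hA hkA h0
    have hAB : A = B := by
      have h1 : A \ B ∪ B \ A = ∅ := Finset.card_eq_zero.mp h0
      have h2 : A \ B = ∅ ∧ B \ A = ∅ := by
        constructor <;> [exact Finset.union_eq_empty.mp h1 |>.1;
          exact Finset.union_eq_empty.mp h1 |>.2]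
      exact Finset.Subset.antisymm
        (fun x hx => by
          by_contra hxB
          exact absurd (Finset.mem_sdiff.mpr ⟨hx, hxB⟩) (by simp [h2.1]))
        (fun x hx => by
          by_contra hxA
          exact absurd (Finset.mem_sdiff.mpr ⟨hx, hxA⟩) (by simp [h2.2]))
    subst hAB
    exact ⟨fun _ => A, ⟨fun i _ => ⟨hM.subset (Finset.coe_subset.mpr hA), hkA⟩,
      fun i hi => absurd hi (Nat.not_lt_zero i)⟩, rfl, rfl⟩
  | succ n ih =>
    intro A hA hkA h
    have key : ∃ A' : Finset V, TARStep A A' ∧ A' ⊆ M ∧ k ≤ A'.card ∧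
        (A' \ B ∪ B \ A').card = n := by
      by_cases hBA : (B \ A).Nonempty
      · obtain ⟨v, hv⟩ := hBA
        have hvB : v ∈ B := (Finset.mem_sdiff.mp hv).1
        have hvA : v ∉ A := (Finset.mem_sdiff.mp hv).2
        refine ⟨insert v A, Or.inl ⟨v, hvA, rfl⟩,
          Finset.insert_subset (hB hvB) hA,
          le_trans hkA (Finset.card_le_card (Finset.subset_insert _ _)), ?_⟩
        have heq : insert v A \ B ∪ B \ insert v A = (A \ B ∪ B \ A).erase v := by
          ext x
          simp only [Finset.mem_union, Finset.mem_sdiff, Finset.mem_insert,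
            Finset.mem_erase]
          by_cases hxv : x = v <;> subst_eqs <;> tauto
        rw [heq, Finset.card_erase_of_mem (by simp [hvB, hvA]), h]
        omega
      · have hBsub : B ⊆ A := by
          intro x hx
          by_contra hxA
          exact hBA ⟨x, Finset.mem_sdiff.mpr ⟨hx, hxA⟩⟩
        have hAB : (A \ B).Nonempty := by
          rw [← Finset.card_pos]
          have : (B \ A) = ∅ := Finset.not_nonempty_iff_eq_empty.mp hBA
          have hcard : (A \ B ∪ B \ A).card = (A \ B).card := by rw [this]; simp
          omega
        obtain ⟨v, hv⟩ := hAB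
        have hvA : v ∈ A := (Finset.mem_sdiff.mp hv).1
        have hvB : v ∉ B := (Finset.mem_sdiff.mp hv).2
        have hBsub' : B ⊆ A.erase v := fun x hx =>
          Finset.mem_erase.mpr ⟨fun hxv => hvB (hxv ▸ hx), hBsub hx⟩
        refine ⟨A.erase v, Or.inr ⟨v, hvA, rfl⟩,
          (Finset.erase_subset _ _).trans hA,
          le_trans hkB (Finset.card_le_card hBsub'), ?_⟩
        have heq : A.erase v \ B ∪ B \ A.erase v = (A \ B ∪ B \ A).erase v := by
          ext x
          simp only [Finset.mem_union, Finset.mem_sdiff, Finset.mem_erase]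
          by_cases hxv : x = v <;> subst_eqs <;> tauto
        rw [heq, Finset.card_erase_of_mem (by simp [hvA, hvB]), h]
        omega
    obtain ⟨A', hstep, hA'M, hkA', hsd⟩ := key
    obtain ⟨f, ⟨hf1, hf2⟩, hf0, hfn⟩ := ih A' hA'M hkA' hsd
    refine ⟨fun i => if i = 0 then A else f (i - 1), ⟨?_, ?_⟩, by simp, by simp [hfn]⟩
    · intro i hi
      by_cases hi0 : i = 0
      · simp [hi0, hM.subset (Finset.coe_subset.mpr hA), hkA]
      · simp only [hi0, if_neg]
        exact hf1 (i - 1) (by omega)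
    · intro i hi
      by_cases hi0 : i = 0
      · subst hi0
        simpa [hf0] using hstep
      · have h1 : i - 1 + 1 = i := by omega
        simp only [hi0, if_neg, Nat.add_one_ne_zero, if_false]
        rw [show i + 1 - 1 = (i - 1) + 1 by omega, ← h1] at *
        exact hf2 (i - 1) (by omega)

theorem stmt18 (G : SimpleGraph V) (Cs Ct : Finset V) (M : Finset V)
    (hM : IsMaximalClique G M) (hs : Cs ⊆ M) (ht : Ct ⊆ M)
    (k : ℕ) (hk : k ≤ min Cs.card Ct.card) :
    IsLeast {ℓ | ∃ f : ℕ → Finset V, TARSeq G k ℓ f ∧ f 0 = Cs ∧ f ℓ = Ct}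
      ((Cs \ Ct ∪ Ct \ Cs).card) := by
  constructor
  · exact construct G M Ct hM.1 ht k (le_trans hk (min_le_right _ _))
      _ Cs hs (le_trans hk (min_le_left _ _)) rfl
  · rintro ℓ ⟨f, ⟨hf1, hf2⟩, h0, hl⟩
    have key : ∀ i ≤ ℓ, (f 0 \ Ct ∪ Ct \ f 0).card ≤ (f i \ Ct ∪ Ct \ f i).card + i := by
      intro i
      induction i with
      | zero => intro _; omega
      | succ j ihj =>
        intro hj
        have h1 := ihj (by omega)
        have h2 := sd_step_le (f j) (f (j + 1)) Ct (hf2 j (by omega))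
        omega
    have h3 := key ℓ le_rfl
    rw [h0, hl] at h3
    simp at h3
    omega
end
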